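/- arXiv:1707.09214 — 6 statements merged into one kernel-verified Lean document; each statement's English description precedes it below -/
import Mathlib

section
/- For every integer d'' ≥ 6 there exists a 3-snake S of some length T in Q_{d''} such that all of the following hold: S_{T−3} = (1,0,1,0,1,0,…,0), S_{T−2} = (1,0,1,0,…,0), S_{T−1} = (1,0,…,0), S_T = (0,…,0), the number of 1-coordinates of S_t is strictly greater than 3 for every t < T−3, and T ≥ s(d''−1). -/
/-- A vertex of the `d`-dimensional hypercube `{0,1}^d`. -/
abbrev Cube (d : ℕ) := Fin d → Bool

/-- One step of `r`-neighbour bootstrap percolation on `Q_d`: a vertex becomes infected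
if it has at least `r` infected neighbours (neighbours = Hamming distance 1). -/
noncomputable def bootStep (d r : ℕ) (A : Set (Cube d)) : Set (Cube d) :=
  A ∪ {v | r ≤ {u : Cube d | hammingDist u v = 1 ∧ u ∈ A}.ncard}

/-- The set of infected sites at time `t`, starting from `A`. -/
noncomputable def boot (d r : ℕ) (A : Set (Cube d)) : ℕ → Set (Cube d)
  | 0 => A
  | t + 1 => bootStep d r (boot d r A t)

/-- `A` percolates: eventually every vertex is infected. -/
def Percolates (d r : ℕ) (A : Set (Cube d)) : Prop :=
  ∃ t, boot d r A t = Set.univ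

/-- The percolation time of `A`: the least `t` with all sites infected. -/
noncomputable def percTime (d r : ℕ) (A : Set (Cube d)) : ℕ :=
  sInf {t | boot d r A t = Set.univ}

/-- `M_r(d)`: the maximal percolation time over percolating subsets of `Q_d`. -/
noncomputable def maxPercTime (d r : ℕ) : ℕ :=
  sSup {T | ∃ A : Set (Cube d), Percolates d r A ∧ percTime d r A = T}

/-- The infection time `t_v` of a vertex `v`. -/
noncomputable def infTime (d r : ℕ) (A : Set (Cube d)) (v : Cube d) : ℕ :=
  sInf {t | v ∈ boot d r A t}

/-- A `k`-snake of length `T` in `Q_d`: a path `S_0, …, S_T` (consecutive vertices at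
Hamming distance 1, all vertices distinct) such that `d(S_t, S_{t'}) ≥ k` whenever
`t' − t ≥ k`. -/
def IsSnake (d k T : ℕ) (S : ℕ → Cube d) : Prop :=
  (∀ t, t < T → hammingDist (S t) (S (t + 1)) = 1) ∧
  (∀ t t', t ≤ T → t' ≤ T → S t = S t' → t = t') ∧
  (∀ t t', t' ≤ T → t + k ≤ t' → k ≤ hammingDist (S t) (S t'))

/-- `s(d)`: the maximal length of a `3`-snake in `Q_d`. -/
noncomputable def snakeMax (d : ℕ) : ℕ :=
  sSup {T | ∃ S : ℕ → Cube d, IsSnake d 3 T S}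

/-- `‖x‖`: the number of `1`-coordinates of `x`. -/
def wt {d : ℕ} (x : Cube d) : ℕ := hammingDist x (fun _ => false)

/-- The vertex of `Q_d` whose `1`-coordinates are exactly the positions in `s`
(0-indexed). -/
def ofOnes (d : ℕ) (s : Finset ℕ) : Cube d := fun i => decide (i.val ∈ s)

/-- `(b, a)`: the vertex of `Q_d` with first coordinate `b` and remaining coordinates `a`. -/
def extendCube (d : ℕ) (b : Bool) (a : Cube (d - 1)) : Cube d :=
  fun i => if h : i.val = 0 then b else a ⟨i.val - 1, by have := i.isLt; omega⟩

/-- `(y, x)`: the vertex of `Q_d` whose first `9` coordinates have `1`s exactly at the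
(0-indexed) positions in `ys ⊆ {0,…,8}` and whose last `d − 9` coordinates are `x`. -/
def embed9 (d : ℕ) (ys : Finset ℕ) (x : Cube (d - 9)) : Cube d :=
  fun i => if h : i.val < 9 then decide (i.val ∈ ys) else x ⟨i.val - 9, by have := i.isLt; omega⟩

/-- `J_1 = [1,1][*]^{d-2}`: vertices whose first two coordinates are `1`. -/
def J1 (d : ℕ) : Set (Cube d) := {x | ∀ i : Fin d, i.val < 2 → x i = true}

/-- `J_2`: the two vertices whose only `1`-coordinates are coordinate 3 together with
exactly one of coordinates 1 and 2 (1-indexed). -/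
def J2 (d : ℕ) : Set (Cube d) := {ofOnes d {0, 2}, ofOnes d {1, 2}}

/-- `J_3`: vertices with `(x_1,x_2,x_3) ∈ {(0,1,0),(1,0,0)}` whose last `d' = d-3`
coordinates form the word `0^{2l} 1 1 0^{d'-2-2l}` for some `0 ≤ l ≤ (d'-2)/2`. -/
def J3 (d : ℕ) : Set (Cube d) :=
  {x | ∃ l : ℕ, 2 * l + 2 ≤ d - 3 ∧
    (x = ofOnes d {0, 3 + 2 * l, 4 + 2 * l} ∨ x = ofOnes d {1, 3 + 2 * l, 4 + 2 * l})}

/-- The five snake conditions of Lemma 3 (for a `3`-snake of length `T` in `Q_{d''}`). -/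
def SnakeConds (d'' T : ℕ) (S : ℕ → Cube d'') : Prop :=
  S T = ofOnes d'' ∅ ∧ S (T - 1) = ofOnes d'' {0} ∧ S (T - 2) = ofOnes d'' {0, 2} ∧
  S (T - 3) = ofOnes d'' {0, 2, 4} ∧ ∀ t, t < T - 3 → 3 < wt (S t)

/-- `S^i = {S_{T-i-3j} : j ≥ 0, T-i-3j ≥ 0}`. -/
def SnakeTail (d'' T : ℕ) (S : ℕ → Cube d'') (i : ℕ) : Set (Cube d'') :=
  {x | ∃ j : ℕ, 3 * j + i ≤ T ∧ x = S (T - i - 3 * j)}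

/-- `I_0`: vertices whose last `d'' = d - 9` coordinates belong to `S^i` for some
`i ∈ {1,2,3}` and whose first `9` coordinates are all `0` except exactly one of the two
coordinates in (1-indexed) positions `2i+2` and `2i+3`, which equals `1`. -/
def I0 (d T : ℕ) (S : ℕ → Cube (d - 9)) : Set (Cube d) :=
  {v | ∃ i ∈ ({1, 2, 3} : Set ℕ), ∃ x ∈ SnakeTail (d - 9) T S i,
    v = embed9 d {2 * i + 1} x ∨ v = embed9 d {2 * i + 2} x}

section Aux

variable {d : ℕ}

lemma ham_eq_sum {n : ℕ} (x y : Fin n → Bool) :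
    hammingDist x y = ∑ i, if x i ≠ y i then 1 else 0 := by
  rw [hammingDist, Finset.card_filter]

lemma ham_comp {n : ℕ} (e : Fin n ≃ Fin n) (x y : Fin n → Bool) :
    hammingDist (fun i => x (e i)) (fun i => y (e i)) = hammingDist x y := by
  rw [ham_eq_sum, ham_eq_sum]
  exact Equiv.sum_comp e (fun i => if x i ≠ y i then 1 else 0)

lemma ham_xor {n : ℕ} (c x y : Fin n → Bool) :
    hammingDist (fun i => xor (x i) (c i)) (fun i => xor (y i) (c i)) = hammingDist x y := by
  rw [ham_eq_sum, ham_eq_sum]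
  refine Finset.sum_congr rfl fun i _ => ?_
  cases x i <;> cases y i <;> cases c i <;> simp

lemma ham_extend (d : ℕ) (hd : 1 ≤ d) (b : Bool) (x y : Cube (d-1)) :
    hammingDist (extendCube d b x) (extendCube d b y) = hammingDist x y := by
  rw [ham_eq_sum, ham_eq_sum]
  have h : d - 1 + 1 = d := by omega
  rw [← (finCongr h).sum_comp (fun i => if extendCube d b x i ≠ extendCube d b y i then 1 else 0)]
  rw [Fin.sum_univ_succ]
  simp [extendCube, Fin.val_succ]

lemma ham_extend_zero (d : ℕ) (hd : 1 ≤ d) (x : Cube (d-1)) :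
    hammingDist (extendCube d true x) (fun _ => false) =
      1 + hammingDist x (fun _ => false) := by
  rw [ham_eq_sum, ham_eq_sum]
  have h : d - 1 + 1 = d := by omega
  rw [← (finCongr h).sum_comp (fun i => if extendCube d true x i ≠ false then 1 else 0)]
  rw [Fin.sum_univ_succ]
  simp [extendCube, Fin.val_succ]

lemma snake3 (d : ℕ) (hd : 4 ≤ d) :
    IsSnake d 3 3 (fun t i => decide (i.val < min t 3)) := by
  refine ⟨?_, ?_, ?_⟩
  · intro t ht
    rw [hammingDist]
    have : (Finset.univ.filter fun i : Fin d =>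
        decide (i.val < min t 3) ≠ decide (i.val < min (t+1) 3)) = {⟨t, by omega⟩} := by
      ext i
      simp only [Finset.mem_filter, Finset.mem_univ, true_and, Finset.mem_singleton,
        ne_eq, decide_eq_decide, Fin.ext_iff]
      omega
    rw [this, Finset.card_singleton]
  · intro t t' ht ht' heq
    by_contra hne
    have key : ∀ u v : ℕ, u < v → v ≤ 3 →
        (fun i : Fin d => decide (i.val < min u 3)) ≠ (fun i => decide (i.val < min v 3)) := by
      intro u v huv hv3 h
      have := congrFun h ⟨u, by omega⟩
      simp only [decide_eq_decide] at this
      omega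
    rcases Nat.lt_or_ge t t' with h | h
    · exact key t t' h ht' heq
    · have : t' < t := by omega
      exact key t' t this ht heq.symm
  · intro t t' ht' htt
    have h0 : t = 0 := by omega
    have h3 : t' = 3 := by omega
    subst h0; subst h3
    rw [hammingDist]
    have : (Finset.univ.filter fun i : Fin d =>
        decide (i.val < min 0 3) ≠ decide (i.val < min 3 3)) =
        {⟨0, by omega⟩, ⟨1, by omega⟩, ⟨2, by omega⟩} := by
      ext i
      simp only [Finset.mem_filter, Finset.mem_univ, true_and, Finset.mem_insert,
        Finset.mem_singleton, ne_eq, decide_eq_decide, Fin.ext_iff]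
      omega
    rw [this]
    rw [Finset.card_insert_of_notMem (by simp [Fin.ext_iff]),
      Finset.card_insert_of_notMem (by simp [Fin.ext_iff]), Finset.card_singleton]

lemma snake_bound (d T : ℕ) (S : ℕ → Cube d) (h : IsSnake d 3 T S) : T ≤ 2 ^ d := by
  have hinj : Function.Injective (fun t : Fin (T+1) => S t.val) := by
    intro t t' heq
    exact Fin.ext (h.2.1 t.val t'.val (by omega) (by omega) heq)
  have := Fintype.card_le_of_injective _ hinj
  simp [Fintype.card_fun] at this; omega

end Aux

/-- For every `d'' ≥ 6` there is a `3`-snake `S` of some length `T` in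
`Q_{d''}` with `S_{T-3} = (1,0,1,0,1,0,…,0)`, `S_{T-2} = (1,0,1,0,…,0)`,
`S_{T-1} = (1,0,…,0)`, `S_T = (0,…,0)`, `‖S_t‖ > 3` for all `t < T - 3`, and
`T ≥ s(d'' − 1)`. -/
theorem stmt2 (d'' : ℕ) (hd : 6 ≤ d'') :
    ∃ (T : ℕ) (S : ℕ → Cube d''), IsSnake d'' 3 T S ∧ 3 ≤ T ∧
      S (T - 3) = ofOnes d'' {0, 2, 4} ∧
      S (T - 2) = ofOnes d'' {0, 2} ∧
      S (T - 1) = ofOnes d'' {0} ∧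
      S T = ofOnes d'' ∅ ∧
      (∀ t, t < T - 3 → 3 < wt (S t)) ∧
      snakeMax (d'' - 1) ≤ T := by
  have hd1 : (1:ℕ) ≤ d'' := by omega
  have hmem3 : (3:ℕ) ∈ {T | ∃ S : ℕ → Cube (d''-1), IsSnake (d''-1) 3 T S} :=
    ⟨fun t i => decide (i.val < min t 3), snake3 (d''-1) (by omega)⟩
  have hbdd : BddAbove {T | ∃ S : ℕ → Cube (d''-1), IsSnake (d''-1) 3 T S} :=
    ⟨2^(d''-1), fun T hT => by obtain ⟨S, hS⟩ := hT; exact snake_bound _ _ _ hS⟩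
  set T' := snakeMax (d''-1) with hT'def
  have hT'mem : T' ∈ {T | ∃ S : ℕ → Cube (d''-1), IsSnake (d''-1) 3 T S} := by
    rw [hT'def, snakeMax]
    exact Nat.sSup_mem ⟨3, hmem3⟩ hbdd
  have hT3 : 3 ≤ T' := by
    rw [hT'def, snakeMax]; exact le_csSup hbdd hmem3
  obtain ⟨S', hadj, hinj, hsep⟩ := hT'mem
  -- translate so that the snake ends at 0
  set X : ℕ → Cube (d''-1) := fun t i => xor (S' t i) (S' T' i) with hXdef
  have hXd : ∀ t s, hammingDist (X t) (X s) = hammingDist (S' t) (S' s) :=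
    fun t s => ham_xor _ _ _
  have hX0 : ∀ i, X T' i = false := fun i => Bool.xor_self _
  have hXinj : ∀ t s, t ≤ T' → s ≤ T' → X t = X s → t = s := by
    intro t s ht hs heq
    refine hinj t s ht hs (funext fun i => ?_)
    have := congrFun heq i
    simp only [hXdef] at this
    cases h : S' T' i <;> rw [h] at this <;> simpa using this
  -- X (T'-1) is the indicator of {a}
  have h1 : hammingDist (X (T'-1)) (X T') = 1 := by
    rw [hXd]
    have e : T' - 1 + 1 = T' := by omega
    have := hadj (T'-1) (by omega)
    rwa [e] at this
  have h1' : (Finset.univ.filter fun i => X (T'-1) i ≠ X T' i).card = 1 := h1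
  obtain ⟨a, haf⟩ := Finset.card_eq_one.mp h1'
  have ha : ∀ i, X (T'-1) i = true ↔ i = a := by
    intro i
    have := Finset.ext_iff.mp haf i
    simp only [Finset.mem_filter, Finset.mem_univ, true_and, Finset.mem_singleton,
      ne_eq, hX0] at this
    rw [← this]
    simp
  -- X (T'-2) is the indicator of {a, b}
  have h2 : hammingDist (X (T'-2)) (X (T'-1)) = 1 := by
    rw [hXd]
    have e : T' - 2 + 1 = T' - 1 := by omega
    have := hadj (T'-2) (by omega)
    rwa [e] at this
  have h2' : (Finset.univ.filter fun i => X (T'-2) i ≠ X (T'-1) i).card = 1 := h2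
  obtain ⟨b, hbf⟩ := Finset.card_eq_one.mp h2'
  have hdiff : ∀ i, X (T'-2) i ≠ X (T'-1) i ↔ i = b := by
    intro i
    have := Finset.ext_iff.mp hbf i
    simpa using this
  have hXne : X (T'-2) ≠ X T' := by
    intro h
    have := hXinj (T'-2) T' (by omega) le_rfl h
    omega
  have hba : b ≠ a := by
    intro h
    apply hXne
    funext i
    rw [hX0]
    by_cases hi : i = b
    · have h3 := (hdiff i).mpr hi
      have h4 : X (T'-1) i = true := (ha i).mpr (hi.trans h)
      rw [h4] at h3
      simpa using h3
    · have h3 : X (T'-2) i = X (T'-1) i := by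
        by_contra hc
        exact hi ((hdiff i).mp hc)
      rw [h3]
      cases h5 : X (T'-1) i
      · rfl
      · exact absurd (((ha i).mp h5).trans h.symm) hi
  have hb2 : ∀ i, X (T'-2) i = true ↔ (i = a ∨ i = b) := by
    intro i
    by_cases hib : i = b
    · have h3 := (hdiff i).mpr hib
      have h4 : X (T'-1) i = false := by
        cases h5 : X (T'-1) i
        · rfl
        · exact absurd (hib.symm.trans ((ha i).mp h5)) hba
      rw [h4] at h3
      simp only [ne_eq, Bool.not_eq_false] at h3
      exact iff_of_true h3 (Or.inr hib)
    · have h3 : X (T'-2) i = X (T'-1) i := by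
        by_contra hc
        exact hib ((hdiff i).mp hc)
      rw [h3, ha i]
      constructor
      · exact fun h => Or.inl h
      · rintro (h | h)
        · exact h
        · exact absurd h hib
  -- the coordinate permutation σ with σ a = 1, σ b = 3
  have h1lt : (1:ℕ) < d'' - 1 := by omega
  have h3lt : (3:ℕ) < d'' - 1 := by omega
  set one : Fin (d''-1) := ⟨1, h1lt⟩ with hone
  set three : Fin (d''-1) := ⟨3, h3lt⟩ with hthree
  set τ : Equiv.Perm (Fin (d''-1)) := Equiv.swap a one with hτ
  set σ : Equiv.Perm (Fin (d''-1)) := τ.trans (Equiv.swap (τ b) three) with hσ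
  have hτa : τ a = one := Equiv.swap_apply_left _ _
  have hτb1 : τ b ≠ one := by
    rw [← hτa]; exact fun h => hba (τ.injective h)
  have h13 : one ≠ three := by simp [hone, hthree, Fin.ext_iff]
  have hσa : σ a = one := by
    rw [hσ, Equiv.trans_apply, hτa]
    exact Equiv.swap_apply_of_ne_of_ne (Ne.symm hτb1) h13
  have hσb : σ b = three := by
    rw [hσ, Equiv.trans_apply]
    exact Equiv.swap_apply_left _ _
  -- the reindexed snake
  set Y : ℕ → Cube (d''-1) := fun t j => X t (σ.symm j) with hYdef
  have hYd : ∀ t s, hammingDist (Y t) (Y s) = hammingDist (X t) (X s) :=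
    fun t s => ham_comp σ.symm (X t) (X s)
  have hYw : ∀ t, hammingDist (Y t) (fun _ => false) = hammingDist (S' t) (S' T') := by
    intro t
    have e1 : hammingDist (Y t) (fun _ => false)
        = hammingDist (fun j => X t (σ.symm j)) (fun j => X T' (σ.symm j)) := by
      congr 1
      funext j
      rw [hX0]
    rw [e1, ham_comp σ.symm (X t) (X T'), hXd]
  have hY1 : ∀ j : Fin (d''-1), Y (T'-1) j = true ↔ j.val = 1 := by
    intro j
    simp only [hYdef]
    rw [ha, Equiv.symm_apply_eq, hσa, hone, Fin.ext_iff]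
  have hY2 : ∀ j : Fin (d''-1), Y (T'-2) j = true ↔ (j.val = 1 ∨ j.val = 3) := by
    intro j
    simp only [hYdef]
    rw [hb2, Equiv.symm_apply_eq, Equiv.symm_apply_eq, hσa, hσb, hone, hthree,
      Fin.ext_iff, Fin.ext_iff]
  have hYT : Y T' = fun _ => false := funext fun j => hX0 _
  -- the new snake
  set S : ℕ → Cube d'' := fun t =>
    if t ≤ T' then extendCube d'' true (Y t) else (fun _ => false) with hSdef
  have hSle : ∀ t, t ≤ T' → S t = extendCube d'' true (Y t) := by
    intro t ht; simp [hSdef, ht]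
  have hSgt : ∀ t, T' < t → S t = fun _ => false := by
    intro t ht; simp [hSdef, Nat.not_le.mpr ht]
  refine ⟨T' + 1, S, ⟨?_, ?_, ?_⟩, by omega, ?_, ?_, ?_, ?_, ?_, by omega⟩
  · -- adjacency
    intro t ht
    rcases Nat.lt_or_ge t T' with h | h
    · rw [hSle t (by omega), hSle (t+1) (by omega), ham_extend d'' hd1, hYd, hXd]
      exact hadj t h
    · have ht' : t = T' := by omega
      subst ht'
      rw [hSle T' le_rfl, hSgt (T'+1) (by omega)]
      rw [hYT, ham_extend_zero d'' hd1, hammingDist_self]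
  · -- injectivity
    intro t t' ht ht' heq
    by_cases h1t : t ≤ T' <;> by_cases h2t : t' ≤ T'
    · rw [hSle t h1t, hSle t' h2t] at heq
      have hY : Y t = Y t' := by
        funext j
        have hj1 : j.val + 1 < d'' := by omega
        have := congrFun heq ⟨j.val + 1, hj1⟩
        simp only [extendCube] at this
        rw [dif_neg (by omega), dif_neg (by omega)] at this
        simpa using this
      have hX : X t = X t' := by
        funext i
        have := congrFun hY (σ i)
        simpa [hYdef] using this
      exact hXinj t t' h1t h2t hX
    · rw [hSle t h1t, hSgt t' (by omega)] at heq
      have := congrFun heq ⟨0, by omega⟩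
      simp [extendCube] at this
    · rw [hSgt t (by omega), hSle t' h2t] at heq
      have := congrFun heq ⟨0, by omega⟩
      simp [extendCube] at this
    · omega
  · -- spread
    intro t t' ht' htt
    by_cases h2t : t' ≤ T'
    · rw [hSle t (by omega), hSle t' h2t, ham_extend d'' hd1, hYd, hXd]
      exact hsep t t' h2t htt
    · have ht'' : t' = T' + 1 := by omega
      subst ht''
      rw [hSle t (by omega), hSgt (T'+1) (by omega), ham_extend_zero d'' hd1, hYw]
      rcases Nat.lt_or_ge (t+3) (T'+1) with h | h
      · have := hsep t T' le_rfl (by omega)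
        omega
      · have htv : t = T' - 2 := by omega
        subst htv
        have hsub : ({a, b} : Finset (Fin (d''-1))) ⊆
            Finset.univ.filter fun i => S' (T'-2) i ≠ S' T' i := by
          intro i hi
          simp only [Finset.mem_insert, Finset.mem_singleton] at hi
          simp only [Finset.mem_filter, Finset.mem_univ, true_and]
          intro hc
          have hfalse : X (T'-2) i = false := by
            simp only [hXdef, hc]
            exact Bool.xor_self _
          rw [(hb2 i).mpr (by tauto)] at hfalse
          simp at hfalse
        have hcard : 2 ≤ hammingDist (S' (T'-2)) (S' T') := by
          have := Finset.card_le_card hsub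
          rwa [Finset.card_pair (fun h => hba h.symm)] at this
        omega
  · -- S (T-3) = ofOnes {0,2,4}
    have e : T' + 1 - 3 = T' - 2 := by omega
    rw [e, hSle (T'-2) (by omega)]
    funext i
    simp only [extendCube, ofOnes]
    by_cases hi : i.val = 0
    · rw [dif_pos hi]
      simp [hi]
    · rw [dif_neg hi]
      refine Bool.eq_iff_iff.mpr ?_
      rw [hY2, decide_eq_true_iff]
      have hiv := i.isLt
      simp only [Finset.mem_insert, Finset.mem_singleton]
      omega
  · -- S (T-2) = ofOnes {0,2}
    have e : T' + 1 - 2 = T' - 1 := by omega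
    rw [e, hSle (T'-1) (by omega)]
    funext i
    simp only [extendCube, ofOnes]
    by_cases hi : i.val = 0
    · rw [dif_pos hi]
      simp [hi]
    · rw [dif_neg hi]
      refine Bool.eq_iff_iff.mpr ?_
      rw [hY1, decide_eq_true_iff]
      have hiv := i.isLt
      simp only [Finset.mem_insert, Finset.mem_singleton]
      omega
  · -- S (T-1) = ofOnes {0}
    have e : T' + 1 - 1 = T' := by omega
    rw [e, hSle T' le_rfl, hYT]
    funext i
    simp only [extendCube, ofOnes]
    by_cases hi : i.val = 0
    · rw [dif_pos hi]
      simp [hi]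
    · rw [dif_neg hi]
      simp [Finset.mem_singleton, hi]
  · -- S T = ofOnes ∅
    rw [hSgt (T'+1) (by omega)]
    funext i
    simp [ofOnes]
  · -- weight condition
    intro t ht
    have ht' : t + 3 ≤ T' := by omega
    rw [hSle t (by omega)]
    show 3 < hammingDist _ _
    rw [ham_extend_zero d'' hd1, hYw]
    have := hsep t T' le_rfl ht'
    omega
end

section
/- For every integer r ≥ 3 and every d ≥ r, the maximal percolation time of r-neighbour bootstrap percolation on the d-dimensional hypercube satisfies M_r(d) ≤ (4r+2)·2^d/d. -/
section Aux

open Finset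

variable {d r : ℕ} {A : Set (Cube d)}

lemma boot_subset_succ (s : ℕ) : boot d r A s ⊆ boot d r A (s + 1) :=
  Set.subset_union_left

lemma boot_mono : Monotone (boot d r A) :=
  monotone_nat_of_le_succ boot_subset_succ

lemma boot_card_ge {s : ℕ} {x : Cube d} (hx : x ∈ boot d r A (s + 1))
    (hx' : x ∉ boot d r A s) :
    r ≤ {u : Cube d | hammingDist u x = 1 ∧ u ∈ boot d r A s}.ncard := by
  rcases hx with h | h
  · exact absurd h hx'
  · exact h

lemma boot_card_lt {s : ℕ} {x : Cube d} (hr : 0 < r) (hx : x ∉ boot d r A (s + 1)) :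
    {u : Cube d | hammingDist u x = 1 ∧ u ∈ boot d r A s}.ncard < r := by
  by_contra h
  push_neg at h
  exact hx (Or.inr h)

/-- the Hamming sphere of radius 1 as a Finset -/
noncomputable def nbr (d : ℕ) (x : Cube d) : Finset (Cube d) := by
  classical exact Finset.univ.filter (fun v => hammingDist v x = 1)

lemma mem_nbr {x v : Cube d} : v ∈ nbr d x ↔ hammingDist v x = 1 := by
  simp [nbr]

lemma hammingDist_update (x : Cube d) (i : Fin d) :
    hammingDist (Function.update x i (!(x i))) x = 1 := by
  classical
  have : ({j | Function.update x i (!(x i)) j ≠ x j} : Finset (Fin d)) = {i} := by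
    ext j
    by_cases hj : j = i
    · subst hj; simp
    · simp [Function.update_apply, hj]
  rw [hammingDist]
  rw [this]
  simp

lemma eq_update_of_dist_one {x v : Cube d} (h : hammingDist v x = 1) :
    ∃ i : Fin d, v = Function.update x i (!(x i)) := by
  classical
  rw [hammingDist] at h
  obtain ⟨i, hi⟩ := Finset.card_eq_one.mp h
  refine ⟨i, funext fun j => ?_⟩
  by_cases hj : j = i
  · subst hj
    have : v j ≠ x j := by
      have : j ∈ ({i | v i ≠ x i} : Finset (Fin d)) := by rw [hi]; simp
      simpa using this
    simp only [Function.update_self]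
    revert this; cases v j <;> cases x j <;> simp
  · have : v j = x j := by
      by_contra hne
      have : j ∈ ({i | v i ≠ x i} : Finset (Fin d)) := by simpa using hne
      rw [hi] at this
      simp at this
      exact hj this
    simp [Function.update_apply, hj, this]

lemma card_nbr (x : Cube d) : (nbr d x).card = d := by
  classical
  have himg : nbr d x = Finset.image (fun i : Fin d => Function.update x i (!(x i))) Finset.univ := by
    ext v
    simp only [mem_nbr, Finset.mem_image, Finset.mem_univ, true_and]
    constructor
    · intro h
      obtain ⟨i, hi⟩ := eq_update_of_dist_one h
      exact ⟨i, hi.symm⟩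
    · rintro ⟨i, rfl⟩
      exact hammingDist_update x i
  rw [himg, Finset.card_image_of_injective _ ?_, Finset.card_univ, Fintype.card_fin]
  intro i j hij
  by_contra hne
  have h2 : Function.update x i (!(x i)) i = Function.update x j (!(x j)) i := congrFun hij i
  rw [Function.update_self, Function.update_of_ne hne] at h2
  exact absurd h2 (Bool.not_ne_self _)

end Aux

section Path

open Finset

variable {d r : ℕ} {A : Set (Cube d)}

lemma exists_pred (hr : 1 ≤ r) {s : ℕ} {x : Cube d} (hx : x ∈ boot d r A (s + 1))
    (hx' : x ∉ boot d r A s) :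
    ∃ y : Cube d, hammingDist y x = 1 ∧ y ∈ boot d r A s ∧
      (∀ s' : ℕ, s = s' + 1 → y ∉ boot d r A s') := by
  have hcard := boot_card_ge hx hx'
  cases s with
  | zero =>
    have hne : {u : Cube d | hammingDist u x = 1 ∧ u ∈ boot d r A 0}.Nonempty := by
      apply Set.nonempty_of_ncard_ne_zero
      omega
    obtain ⟨y, hy1, hy2⟩ := hne
    exact ⟨y, hy1, hy2, fun s' h => by omega⟩
  | succ s'' =>
    have hlt := boot_card_lt (A := A) (s := s'') (x := x) (by omega) hx'
    have hnsub : ¬ ({u : Cube d | hammingDist u x = 1 ∧ u ∈ boot d r A (s'' + 1)} ⊆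
        {u : Cube d | hammingDist u x = 1 ∧ u ∈ boot d r A s''}) := by
      intro hss
      have := Set.ncard_le_ncard hss (Set.toFinite _)
      omega
    obtain ⟨y, hy1, hy0⟩ := Set.not_subset.mp hnsub
    refine ⟨y, hy1.1, hy1.2, ?_⟩
    intro s' h hb
    obtain rfl : s' = s'' := by omega
    exact hy0 ⟨hy1.1, hb⟩

lemma exists_path (hr : 1 ≤ r) {T : ℕ} (hT : 1 ≤ T)
    (hfull : boot d r A T = Set.univ) (hnf : boot d r A (T - 1) ≠ Set.univ) :
    ∃ u : ℕ → Cube d,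
      (∀ s, s ≤ T → u s ∈ boot d r A s) ∧
      (∀ s, 1 ≤ s → s ≤ T → u s ∉ boot d r A (s - 1)) ∧
      (∀ s, s < T → hammingDist (u s) (u (s + 1)) = 1) := by
  classical
  obtain ⟨v0, hv0⟩ : ∃ v0 : Cube d, v0 ∉ boot d r A (T - 1) := by
    by_contra h
    push_neg at h
    exact hnf (Set.eq_univ_of_forall h)
  let g : ℕ → Cube d := fun j => Nat.rec v0 (fun j gj =>
    if h : ∃ y : Cube d, hammingDist y gj = 1 ∧ y ∈ boot d r A (T - j - 1) ∧
        (∀ s' : ℕ, T - j - 1 = s' + 1 → y ∉ boot d r A s')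
    then h.choose else gj) j
  have hstep : ∀ j, j < T → g j ∈ boot d r A (T - j) → g j ∉ boot d r A (T - j - 1) →
      hammingDist (g (j + 1)) (g j) = 1 ∧ g (j + 1) ∈ boot d r A (T - j - 1) ∧
      (∀ s' : ℕ, T - j - 1 = s' + 1 → g (j + 1) ∉ boot d r A s') := by
    intro j hj h1 h2
    have h1' : g j ∈ boot d r A ((T - j - 1) + 1) := by
      rwa [show T - j - 1 + 1 = T - j by omega]
    have hex : ∃ y : Cube d, hammingDist y (g j) = 1 ∧ y ∈ boot d r A (T - j - 1) ∧
        (∀ s' : ℕ, T - j - 1 = s' + 1 → y ∉ boot d r A s') :=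
      exists_pred hr h1' h2
    have hg : g (j + 1) = if h : ∃ y : Cube d, hammingDist y (g j) = 1 ∧
        y ∈ boot d r A (T - j - 1) ∧ (∀ s' : ℕ, T - j - 1 = s' + 1 → y ∉ boot d r A s')
        then h.choose else g j := rfl
    rw [hg, dif_pos hex]
    exact hex.choose_spec
  have hinv : ∀ j, j ≤ T → g j ∈ boot d r A (T - j) ∧ (j < T → g j ∉ boot d r A (T - j - 1)) := by
    intro j
    induction j with
    | zero =>
      intro _
      constructor
      · rw [Nat.sub_zero, hfull]; trivial
      · intro _; simpa using (show g 0 ∉ boot d r A (T - 1) from hv0)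
    | succ j ih =>
      intro hj1
      have hj : j < T := by omega
      obtain ⟨h1, h2⟩ := ih (by omega)
      obtain ⟨hd1, hd2, hd3⟩ := hstep j hj h1 (h2 hj)
      refine ⟨by rwa [show T - (j+1) = T - j - 1 by omega], ?_⟩
      intro hlt
      have := hd3 (T - j - 2) (by omega)
      rwa [show T - (j+1) - 1 = T - j - 2 by omega]
  refine ⟨fun s => g (T - s), ?_, ?_, ?_⟩
  · intro s hs
    have := (hinv (T - s) (by omega)).1
    rwa [show T - (T - s) = s by omega] at this
  · intro s hs1 hs2
    have := (hinv (T - s) (by omega)).2 (by omega)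
    rwa [show T - (T - s) - 1 = s - 1 by omega] at this
  · intro s hs
    have h1 := (hinv (T - s - 1) (by omega)).1
    have h2 := (hinv (T - s - 1) (by omega)).2 (by omega)
    obtain ⟨hd1, _, _⟩ := hstep (T - s - 1) (by omega) h1 h2
    rw [show T - s - 1 + 1 = T - s by omega] at hd1
    show hammingDist (g (T - s)) (g (T - (s + 1))) = 1
    rw [show T - (s + 1) = T - s - 1 by omega]
    exact hd1

end Path

section Count

open Finset

variable {d r : ℕ} {A : Set (Cube d)}

lemma percTime_master (hr : 3 ≤ r) (hd : r ≤ d) (hA : Percolates d r A) :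
    percTime d r A * d ≤ (4 * r + 2) * 2 ^ d := by
  classical
  set T := percTime d r A with hTdef
  rcases Nat.eq_zero_or_pos T with hT0 | hT1
  · simp [hT0]
  have hfull : boot d r A T = Set.univ := Nat.sInf_mem hA
  have hTlt : T - 1 < percTime d r A := by omega
  have hnf : boot d r A (T - 1) ≠ Set.univ := Nat.notMem_of_lt_sInf hTlt
  obtain ⟨u, hu1, hu2, hu3⟩ := exists_path (by omega) hT1 hfull hnf
  have hcube : Fintype.card (Cube d) = 2 ^ d := by
    simp [Fintype.card_fun]
  have huinj : ∀ s s', s ≤ T → s' ≤ T → u s = u s' → s = s' := by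
    intro s s' hs hs' he
    by_contra hne
    wlog h : s < s' generalizing s s'
    · exact this s' s hs' hs he.symm (by omega) (by omega)
    · exact hu2 s' (by omega) hs' (boot_mono (by omega : s ≤ s' - 1) (he ▸ hu1 s hs))
  set t : Cube d → ℕ := fun v => sInf {t | v ∈ boot d r A t} with htdef
  have htmem : ∀ v : Cube d, v ∈ boot d r A (t v) := by
    intro v
    have hnev : {s : ℕ | v ∈ boot d r A s}.Nonempty := ⟨T, show v ∈ boot d r A T by rw [hfull]; trivial⟩
    exact Nat.sInf_mem hnev
  have htmin : ∀ (v : Cube d) (s : ℕ), s < t v → v ∉ boot d r A s :=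
    fun v s hs => Nat.notMem_of_lt_sInf hs
  have htmono : ∀ (v : Cube d) (s : ℕ), t v ≤ s → v ∈ boot d r A s :=
    fun v s hs => boot_mono hs (htmem v)
  -- trivial bound : T + 1 ≤ 2 ^ d
  have htriv : T + 1 ≤ 2 ^ d := by
    have hinj : Set.InjOn u ↑(range (T + 1)) := by
      intro a ha b hb he
      rw [Finset.mem_coe, Finset.mem_range] at ha hb
      exact huinj a b (by omega) (by omega) he
    have hcard := Finset.card_le_card_of_injOn u (fun s _ => Finset.mem_univ (u s)) hinj
    rwa [Finset.card_range, Finset.card_univ, hcube] at hcard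
  -- the double counting
  have hF2 : ∀ s, s ≤ T → ((nbr d (u s)).filter (fun v => ¬ (s ≤ t v + 1))).card ≤ r - 1 := by
    intro s hs
    by_cases hs2 : 2 ≤ s
    · have hust : u s ∉ boot d r A (s - 2 + 1) := by
        rw [show s - 2 + 1 = s - 1 by omega]
        exact hu2 s (by omega) hs
      have hlt := boot_card_lt (by omega) hust
      have hsub : (nbr d (u s)).filter (fun v => ¬ (s ≤ t v + 1)) ⊆
          (Set.toFinite {y : Cube d | hammingDist y (u s) = 1 ∧ y ∈ boot d r A (s - 2)}).toFinset := by
        intro v hv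
        rw [Finset.mem_filter, mem_nbr] at hv
        rw [Set.Finite.mem_toFinset]
        exact ⟨hv.1, htmono v (s - 2) (by omega)⟩
      have hcle := Finset.card_le_card hsub
      have hnc := Set.ncard_eq_toFinset_card
        {y : Cube d | hammingDist y (u s) = 1 ∧ y ∈ boot d r A (s - 2)}
        (Set.toFinite _)
      omega
    · have hemp : (nbr d (u s)).filter (fun v => ¬ (s ≤ t v + 1)) = ∅ :=
        Finset.filter_eq_empty_iff.mpr (fun v _ => by omega)
      rw [hemp]
      simp
  have hswap : ∑ s ∈ range (T + 1), ((nbr d (u s)).filter (fun v => s ≤ t v + 1)).card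
      = ∑ v : Cube d, ((range (T + 1)).filter
          (fun s => hammingDist v (u s) = 1 ∧ s ≤ t v + 1)).card := by
    have hrw : ∀ s, (nbr d (u s)).filter (fun v => s ≤ t v + 1)
        = univ.filter (fun v => hammingDist v (u s) = 1 ∧ s ≤ t v + 1) := by
      intro s
      ext v
      simp [mem_nbr, Finset.mem_filter]
    simp only [hrw, Finset.card_filter]
    exact Finset.sum_comm
  have hGv : ∀ v : Cube d, ((range (T + 1)).filter
      (fun s => hammingDist v (u s) = 1 ∧ s ≤ t v + 1)).card ≤ r + 2 := by
    intro v
    have hsub : (range (T + 1)).filter (fun s => hammingDist v (u s) = 1 ∧ s ≤ t v + 1)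
        ⊆ ((range (T + 1)).filter (fun s => hammingDist v (u s) = 1 ∧ s + 2 ≤ t v))
          ∪ {t v - 1, t v, t v + 1} := by
      intro s hs
      rw [Finset.mem_filter, Finset.mem_range] at hs
      rw [Finset.mem_union, Finset.mem_filter, Finset.mem_range]
      by_cases hc : s + 2 ≤ t v
      · exact Or.inl ⟨hs.1, hs.2.1, hc⟩
      · right
        simp only [Finset.mem_insert, Finset.mem_singleton]
        omega
    have hE : ((range (T + 1)).filter (fun s => hammingDist v (u s) = 1 ∧ s + 2 ≤ t v)).card
        ≤ r - 1 := by
      by_cases htv : 2 ≤ t v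
      · have hvn : v ∉ boot d r A (t v - 2 + 1) := by
          rw [show t v - 2 + 1 = t v - 1 by omega]
          exact htmin v (t v - 1) (by omega)
        have hlt := boot_card_lt (by omega) hvn
        have hmaps : ∀ s ∈ (range (T + 1)).filter
            (fun s => hammingDist v (u s) = 1 ∧ s + 2 ≤ t v),
            u s ∈ (Set.toFinite {y : Cube d | hammingDist y v = 1 ∧
              y ∈ boot d r A (t v - 2)}).toFinset := by
          intro s hs
          rw [Finset.mem_filter, Finset.mem_range] at hs
          rw [Set.Finite.mem_toFinset]
          refine ⟨by rw [hammingDist_comm]; exact hs.2.1, ?_⟩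
          exact boot_mono (by omega : s ≤ t v - 2) (hu1 s (by omega))
        have hinj : Set.InjOn u ↑((range (T + 1)).filter
            (fun s => hammingDist v (u s) = 1 ∧ s + 2 ≤ t v)) := by
          intro a ha b hb he
          rw [Finset.mem_coe, Finset.mem_filter, Finset.mem_range] at ha hb
          exact huinj a b (by omega) (by omega) he
        have hcle := Finset.card_le_card_of_injOn u hmaps hinj
        have hnc := Set.ncard_eq_toFinset_card
          {y : Cube d | hammingDist y v = 1 ∧ y ∈ boot d r A (t v - 2)}
          (Set.toFinite _)
        omega
      · have hemp : (range (T + 1)).filter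
            (fun s => hammingDist v (u s) = 1 ∧ s + 2 ≤ t v) = ∅ :=
          Finset.filter_eq_empty_iff.mpr (fun s _ h => by omega)
        rw [hemp]
        simp
    have h3 : ({t v - 1, t v, t v + 1} : Finset ℕ).card ≤ 3 := by
      calc ({t v - 1, t v, t v + 1} : Finset ℕ).card
          ≤ ({t v, t v + 1} : Finset ℕ).card + 1 := Finset.card_insert_le _ _
        _ ≤ (({t v + 1} : Finset ℕ).card + 1) + 1 :=
            Nat.add_le_add_right (Finset.card_insert_le _ _) 1
        _ = 3 := by rw [Finset.card_singleton]
    calc ((range (T + 1)).filter (fun s => hammingDist v (u s) = 1 ∧ s ≤ t v + 1)).card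
        ≤ (((range (T + 1)).filter (fun s => hammingDist v (u s) = 1 ∧ s + 2 ≤ t v))
          ∪ {t v - 1, t v, t v + 1}).card := Finset.card_le_card hsub
      _ ≤ ((range (T + 1)).filter (fun s => hammingDist v (u s) = 1 ∧ s + 2 ≤ t v)).card
          + ({t v - 1, t v, t v + 1} : Finset ℕ).card := Finset.card_union_le _ _
      _ ≤ (r - 1) + 3 := Nat.add_le_add hE h3
      _ ≤ r + 2 := by omega
  have hsum : (T + 1) * d = ∑ s ∈ range (T + 1),
      (((nbr d (u s)).filter (fun v => s ≤ t v + 1)).card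
        + ((nbr d (u s)).filter (fun v => ¬ (s ≤ t v + 1))).card) := by
    rw [Finset.sum_congr rfl (fun s _ => by
      rw [Finset.card_filter_add_card_filter_not, card_nbr])]
    rw [Finset.sum_const, Finset.card_range, smul_eq_mul]
  have hmain : (T + 1) * d ≤ (r + 2) * 2 ^ d + (T + 1) * (r - 1) := by
    rw [hsum, Finset.sum_add_distrib]
    have h2 : ∑ s ∈ range (T + 1), ((nbr d (u s)).filter (fun v => ¬ (s ≤ t v + 1))).card
        ≤ (T + 1) * (r - 1) := by
      calc ∑ s ∈ range (T + 1), ((nbr d (u s)).filter (fun v => ¬ (s ≤ t v + 1))).card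
          ≤ ∑ _s ∈ range (T + 1), (r - 1) :=
            Finset.sum_le_sum (fun s hs => hF2 s (by
              rw [Finset.mem_range] at hs; omega))
        _ = (T + 1) * (r - 1) := by rw [Finset.sum_const, Finset.card_range, smul_eq_mul]
    have h1 : ∑ s ∈ range (T + 1), ((nbr d (u s)).filter (fun v => s ≤ t v + 1)).card
        ≤ (r + 2) * 2 ^ d := by
      rw [hswap]
      calc ∑ v : Cube d, ((range (T + 1)).filter
            (fun s => hammingDist v (u s) = 1 ∧ s ≤ t v + 1)).card
          ≤ ∑ _v : Cube d, (r + 2) := Finset.sum_le_sum (fun v _ => hGv v)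
        _ = 2 ^ d * (r + 2) := by rw [Finset.sum_const, Finset.card_univ, hcube, smul_eq_mul]
        _ = (r + 2) * 2 ^ d := mul_comm _ _
    omega
  -- conclude
  rcases le_or_gt d (4 * r + 2) with hcase | hcase
  · calc T * d ≤ 2 ^ d * (4 * r + 2) := Nat.mul_le_mul (by omega) hcase
      _ = (4 * r + 2) * 2 ^ d := mul_comm _ _
  · have h1R : ((T : ℝ) + 1) * d ≤ ((r : ℝ) + 2) * 2 ^ d + ((T : ℝ) + 1) * ((r : ℝ) - 1) := by
      have h := hmain
      zify [show 1 ≤ r by omega] at h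
      exact_mod_cast h
    have hrR : (3 : ℝ) ≤ (r : ℝ) := by exact_mod_cast hr
    have hdR : 4 * (r : ℝ) + 3 ≤ (d : ℝ) := by exact_mod_cast hcase
    have hPpos : (0 : ℝ) < 2 ^ d := by positivity
    have hT0R : (0 : ℝ) ≤ (T : ℝ) := by positivity
    rw [← @Nat.cast_le ℝ]
    push_cast
    set Tr := (T : ℝ)
    set rr := (r : ℝ)
    set dr := (d : ℝ)
    set P := (2 : ℝ) ^ d with hP
    -- goal : Tr * dr ≤ (4 * rr + 2) * P
    have k1 : (Tr + 1) * (dr - rr + 1) ≤ (rr + 2) * P := by nlinarith [h1R]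
    have hA' : ((Tr + 1) * (rr - 1)) * (3 * rr + 4) ≤ ((Tr + 1) * (rr - 1)) * (dr - rr + 1) := by
      apply mul_le_mul_of_nonneg_left (by linarith) (by nlinarith)
    have hB : ((Tr + 1) * (dr - rr + 1)) * (rr - 1) ≤ ((rr + 2) * P) * (rr - 1) :=
      mul_le_mul_of_nonneg_right k1 (by linarith)
    have hC : (3 * rr + 4) * ((Tr + 1) * (dr - rr + 1)) ≤ (3 * rr + 4) * ((rr + 2) * P) :=
      mul_le_mul_of_nonneg_left k1 (by linarith)
    have hE2 : (0 : ℝ) ≤ (3 * rr + 4) * dr := by nlinarith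
    have hF2' : (0 : ℝ) ≤ (8 * rr ^ 2 + 11 * rr + 2) * P := by nlinarith
    have hfinal : (3 * rr + 4) * (Tr * dr) ≤ (3 * rr + 4) * ((4 * rr + 2) * P) := by
      nlinarith [hA', hB, hC, hE2, hF2']
    have := le_of_mul_le_mul_left hfinal (by linarith : (0 : ℝ) < 3 * rr + 4)
    linarith

end Count


/-- For every `r ≥ 3` and every `d ≥ r`, `M_r(d) ≤ (4r+2)·2^d/d`. -/
theorem stmt3 (r d : ℕ) (hr : 3 ≤ r) (hd : r ≤ d) :
    (maxPercTime d r : ℝ) ≤ (4 * r + 2) * 2 ^ d / d := by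
  have hd3 : 3 ≤ d := le_trans hr hd
  have hdR : (0 : ℝ) < d := by exact_mod_cast (show 0 < d by omega)
  have hne : ({T | ∃ A : Set (Cube d), Percolates d r A ∧ percTime d r A = T}).Nonempty := by
    refine ⟨0, Set.univ, ⟨0, rfl⟩, ?_⟩
    exact Nat.sInf_eq_zero.mpr (Or.inl rfl)
  have hbdd : BddAbove {T | ∃ A : Set (Cube d), Percolates d r A ∧ percTime d r A = T} := by
    refine ⟨(4 * r + 2) * 2 ^ d, ?_⟩
    rintro T ⟨A, hA, rfl⟩
    have hm := percTime_master hr hd hA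
    have hle : percTime d r A * 1 ≤ percTime d r A * d :=
      Nat.mul_le_mul_left _ (by omega)
    rw [mul_one] at hle
    exact le_trans hle hm
  obtain ⟨A, hA, hTA⟩ : ∃ A : Set (Cube d), Percolates d r A ∧
      percTime d r A = maxPercTime d r := Nat.sSup_mem hne hbdd
  rw [le_div_iff₀ hdR]
  have hm := percTime_master hr hd hA
  rw [hTA] at hm
  exact_mod_cast hm
end

section
/- For every integer r ≥ 3 and every d ≥ r, one has M_r(d) ≥ M_3(d−r+3): infecting the complement of a (d−r+3)-dimensional subcube together with a percolating configuration of maximal percolation time for the 3-neighbour process inside that subcube yields a percolating configuration for the r-neighbour process on Q_d whose percolation time is at least M_3(d−r+3). -/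
namespace Stmt6Aux
variable {d : ℕ}

def flip (v : Cube d) (i : Fin d) : Cube d := Function.update v i (!(v i))

lemma flip_self (v : Cube d) (i : Fin d) : flip v i i = !(v i) := Function.update_self ..

lemma flip_ne (v : Cube d) {i j : Fin d} (h : j ≠ i) : flip v i j = v j :=
  Function.update_of_ne h _ _

lemma flip_injective (v : Cube d) : Function.Injective (flip v) := by
  intro i j h
  by_contra hne
  have h1 : flip v i i = flip v j i := by rw [h]
  rw [flip_self, flip_ne v hne] at h1
  simp at h1

lemma hammingDist_flip (v : Cube d) (i : Fin d) : hammingDist (flip v i) v = 1 := by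
  have : ({j | flip v i j ≠ v j} : Finset (Fin d)) = {i} := by
    ext j
    simp only [Finset.mem_filter, Finset.mem_univ, true_and, Finset.mem_singleton,
      Set.mem_setOf_eq]
    constructor
    · intro hj; by_contra hne; exact hj (flip_ne v hne)
    · rintro rfl; rw [flip_self]; simp
  rw [hammingDist, this, Finset.card_singleton]

lemma eq_flip_of_dist_one {u v : Cube d} (h : hammingDist u v = 1) : ∃ i, u = flip v i := by
  rw [hammingDist, Finset.card_eq_one] at h
  obtain ⟨i0, hi⟩ := h
  refine ⟨i0, funext fun j => ?_⟩
  have hmem : ∀ j : Fin d, u j ≠ v j ↔ j = i0 := by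
    intro j
    rw [← Finset.mem_singleton, ← hi]
    simp
  rcases eq_or_ne j i0 with rfl | hne
  · rw [flip_self]
    have := (hmem j).2 rfl
    revert this; cases u j <;> cases v j <;> simp
  · rw [flip_ne v hne]
    by_contra hc
    exact hne ((hmem j).1 hc)

def iota (d' d : ℕ) (x : Cube d') : Cube d :=
  fun i => if h : i.val < d' then x ⟨i.val, h⟩ else true

def Csub (d' d : ℕ) : Set (Cube d) := {v | ∀ i : Fin d, d' ≤ i.val → v i = true}

variable {d' : ℕ}

lemma iota_injective (h : d' ≤ d) : Function.Injective (iota d' d) := by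
  intro x y hxy
  funext i
  have := congrFun hxy ⟨i.val, lt_of_lt_of_le i.isLt h⟩
  simpa [iota, i.isLt] using this

lemma iota_mem_Csub (x : Cube d') : iota d' d x ∈ Csub d' d := by
  intro i hi
  simp [iota, Nat.not_lt.mpr hi]

lemma range_iota (h : d' ≤ d) : Set.range (iota d' d) = Csub d' d := by
  apply Set.Subset.antisymm
  · rintro _ ⟨x, rfl⟩; exact iota_mem_Csub x
  · intro v hv
    refine ⟨fun i => v ⟨i.val, lt_of_lt_of_le i.isLt h⟩, funext fun i => ?_⟩
    by_cases hi : i.val < d'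
    · simp [iota, hi]
    · simp [iota, hi, hv i (Nat.le_of_not_lt hi)]

lemma iota_flip (h : d' ≤ d) (x : Cube d') (i : Fin d') :
    iota d' d (flip x i) = flip (iota d' d x) ⟨i.val, lt_of_lt_of_le i.isLt h⟩ := by
  funext j
  by_cases hj : j = ⟨i.val, lt_of_lt_of_le i.isLt h⟩
  · subst hj
    rw [flip_self]
    simp only [iota, i.isLt, dif_pos]
    have : (⟨i.val, i.isLt⟩ : Fin d') = i := rfl
    rw [this, flip_self]
  · rw [flip_ne _ hj]
    by_cases hjd : j.val < d'
    · simp only [iota, hjd, dif_pos]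
      rw [flip_ne]
      intro he
      exact hj (by ext; simpa using congrArg Fin.val he)
    · simp [iota, hjd]

lemma ncard_high (h : d' ≤ d) : ({i : Fin d | d' ≤ i.val} : Set (Fin d)).ncard = d - d' := by
  rw [Set.ncard_eq_toFinset_card']
  have hemb : Function.Injective (fun j : Fin (d - d') => (⟨d' + j.val, by omega⟩ : Fin d)) := by
    intro a b hab
    simp only [Fin.mk.injEq] at hab
    exact Fin.ext (by omega)
  have : ({i : Fin d | d' ≤ i.val} : Set (Fin d)).toFinset
      = Finset.map ⟨_, hemb⟩ Finset.univ := by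
    ext i
    simp only [Set.mem_toFinset, Set.mem_setOf_eq, Finset.mem_map, Finset.mem_univ, true_and,
      Function.Embedding.coeFn_mk]
    constructor
    · intro hi
      exact ⟨⟨i.val - d', by omega⟩, by ext; simp; omega⟩
    · rintro ⟨j, rfl⟩; simp
  rw [this, Finset.card_map, Finset.card_univ, Fintype.card_fin]

lemma nbrs_out_eq (h : d' ≤ d) (x : Cube d') :
    {u : Cube d | hammingDist u (iota d' d x) = 1 ∧ u ∈ (Csub d' d)ᶜ}
      = flip (iota d' d x) '' {i : Fin d | d' ≤ i.val} := by
  ext u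
  constructor
  · rintro ⟨h1, h2⟩
    obtain ⟨i, rfl⟩ := eq_flip_of_dist_one h1
    refine ⟨i, ?_, rfl⟩
    by_contra hi
    apply h2
    intro j hj
    rw [flip_ne _ (fun he : j = i => hi (he ▸ hj))]
    exact iota_mem_Csub x j hj
  · rintro ⟨i, hi, rfl⟩
    refine ⟨hammingDist_flip _ _, fun hC => ?_⟩
    have h2 := hC i hi
    rw [flip_self] at h2
    have h3 : iota d' d x i = true := iota_mem_Csub x i hi
    rw [h3] at h2
    simp at h2

lemma nbrs_in_eq (h : d' ≤ d) (E : Set (Cube d')) (x : Cube d') :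
    {u : Cube d | hammingDist u (iota d' d x) = 1 ∧ u ∈ iota d' d '' E}
      = iota d' d '' {y | hammingDist y x = 1 ∧ y ∈ E} := by
  ext u
  constructor
  · rintro ⟨h1, y, hy, rfl⟩
    obtain ⟨i, hflip⟩ := eq_flip_of_dist_one h1
    have hid : i.val < d' := by
      by_contra hi
      have hle : d' ≤ i.val := Nat.le_of_not_lt hi
      have h2 : iota d' d x i = true := iota_mem_Csub x i hle
      have h3 : iota d' d y i = true := iota_mem_Csub y i hle
      rw [hflip, flip_self, h2] at h3
      simp at h3
    have heq : iota d' d y = iota d' d (flip x ⟨i.val, hid⟩) := by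
      rw [iota_flip h, hflip]
    have hy2 := iota_injective h heq
    exact ⟨flip x ⟨i.val, hid⟩, ⟨hammingDist_flip _ _, hy2 ▸ hy⟩, by rw [← hy2]⟩
  · rintro ⟨y, ⟨h1, h2⟩, rfl⟩
    obtain ⟨i, rfl⟩ := eq_flip_of_dist_one h1
    rw [iota_flip h]
    exact ⟨hammingDist_flip _ _, ⟨flip x i, h2, by rw [iota_flip h]⟩⟩

lemma ncard_nbrs (h : d' ≤ d) (E : Set (Cube d')) (x : Cube d') :
    {u : Cube d | hammingDist u (iota d' d x) = 1
        ∧ (u ∈ (Csub d' d)ᶜ ∨ u ∈ iota d' d '' E)}.ncard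
      = (d - d') + {y : Cube d' | hammingDist y x = 1 ∧ y ∈ E}.ncard := by
  have hsplit : {u : Cube d | hammingDist u (iota d' d x) = 1
        ∧ (u ∈ (Csub d' d)ᶜ ∨ u ∈ iota d' d '' E)}
      = {u : Cube d | hammingDist u (iota d' d x) = 1 ∧ u ∈ (Csub d' d)ᶜ}
        ∪ {u : Cube d | hammingDist u (iota d' d x) = 1 ∧ u ∈ iota d' d '' E} := by
    ext u
    simp only [Set.mem_setOf_eq, Set.mem_union]
    tauto
  have hdisj : Disjoint {u : Cube d | hammingDist u (iota d' d x) = 1 ∧ u ∈ (Csub d' d)ᶜ}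
      {u : Cube d | hammingDist u (iota d' d x) = 1 ∧ u ∈ iota d' d '' E} := by
    rw [Set.disjoint_left]
    rintro u ⟨_, hu1⟩ ⟨_, y, _, rfl⟩
    exact hu1 (iota_mem_Csub y)
  rw [hsplit, Set.ncard_union_eq hdisj (Set.toFinite _) (Set.toFinite _),
    nbrs_out_eq h, nbrs_in_eq h,
    Set.ncard_image_of_injective _ (flip_injective _), ncard_high h,
    Set.ncard_image_of_injective _ (iota_injective h)]

lemma bootStep_eq (h : d' ≤ d) (E : Set (Cube d')) :
    bootStep d ((d - d') + 3) ((Csub d' d)ᶜ ∪ iota d' d '' E)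
      = (Csub d' d)ᶜ ∪ iota d' d '' (bootStep d' 3 E) := by
  ext v
  by_cases hv : v ∈ Csub d' d
  · obtain ⟨x, rfl⟩ : v ∈ Set.range (iota d' d) := (range_iota h).symm ▸ hv
    have hnotC : iota d' d x ∉ (Csub d' d)ᶜ := fun hc => hc hv
    have himg : ∀ F : Set (Cube d'), iota d' d x ∈ iota d' d '' F ↔ x ∈ F := by
      intro F
      constructor
      · rintro ⟨y, hy, he⟩
        rwa [← iota_injective h he]
      · exact fun hx => ⟨x, hx, rfl⟩
    simp only [bootStep, Set.mem_union, Set.mem_setOf_eq, ncard_nbrs h E x, himg]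
    constructor
    · rintro ((hc | hx) | hn)
      · exact absurd hc hnotC
      · exact Or.inr (Or.inl hx)
      · exact Or.inr (Or.inr (by omega))
    · rintro (hc | (hx | hn))
      · exact absurd hc hnotC
      · exact Or.inl (Or.inr hx)
      · exact Or.inr (by omega)
  · have hv' : v ∈ (Csub d' d)ᶜ := hv
    constructor <;> intro _
    · exact Or.inl hv'
    · exact Or.inl (Or.inl hv')

lemma boot_eq (h : d' ≤ d) (A : Set (Cube d')) (t : ℕ) :
    boot d ((d - d') + 3) ((Csub d' d)ᶜ ∪ iota d' d '' A) t
      = (Csub d' d)ᶜ ∪ iota d' d '' (boot d' 3 A t) := by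
  induction t with
  | zero => rfl
  | succ t ih => rw [boot, ih, bootStep_eq h, boot]

lemma union_eq_univ_iff (h : d' ≤ d) (E : Set (Cube d')) :
    (Csub d' d)ᶜ ∪ iota d' d '' E = Set.univ ↔ E = Set.univ := by
  constructor
  · intro he
    rw [Set.eq_univ_iff_forall]
    intro y
    have hy : iota d' d y ∈ (Csub d' d)ᶜ ∪ iota d' d '' E := he ▸ Set.mem_univ _
    rcases hy with hc | ⟨z, hz, hze⟩
    · exact absurd (iota_mem_Csub y) hc
    · rwa [← iota_injective h hze]
  · rintro rfl
    rw [Set.eq_univ_iff_forall]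
    intro v
    by_cases hv : v ∈ Csub d' d
    · obtain ⟨x, rfl⟩ : v ∈ Set.range (iota d' d) := (range_iota h).symm ▸ hv
      exact Or.inr ⟨x, Set.mem_univ _, rfl⟩
    · exact Or.inl hv

lemma boot_mono (d r : ℕ) (A : Set (Cube d)) (t : ℕ) :
    boot d r A t ⊆ boot d r A (t + 1) := by
  rw [boot]
  exact Set.subset_union_left

lemma boot_fixed (d r : ℕ) (A : Set (Cube d)) (t : ℕ)
    (h : boot d r A t = boot d r A (t + 1)) (s : ℕ) :
    boot d r A (t + s) = boot d r A t := by
  induction s with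
  | zero => rfl
  | succ s ih =>
    have h1 : boot d r A (t + s + 1) = bootStep d r (boot d r A (t + s)) := rfl
    rw [show t + (s + 1) = t + s + 1 from rfl, h1, ih, ← boot, ← h]

lemma percTime_le_card {d r : ℕ} {A : Set (Cube d)} (h : Percolates d r A) :
    percTime d r A ≤ Nat.card (Cube d) := by
  set N := percTime d r A with hN
  have hmem : boot d r A N = Set.univ := Nat.sInf_mem h
  have key : ∀ t, t ≤ N → t ≤ (boot d r A t).ncard := by
    intro t
    induction t with
    | zero => intro _; exact Nat.zero_le _
    | succ t ih =>
      intro ht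
      have ht' : t < N := ht
      have hne : boot d r A t ≠ boot d r A (t + 1) := by
        intro he
        have h1 : boot d r A t ≠ Set.univ := by
          intro hu
          have : N ≤ t := Nat.sInf_le hu
          omega
        have h2 : boot d r A (t + (N - t)) = boot d r A t := boot_fixed d r A t he _
        rw [show t + (N - t) = N by omega] at h2
        exact h1 (h2 ▸ hmem)
      have hss : boot d r A t ⊂ boot d r A (t + 1) :=
        ⟨boot_mono d r A t, fun hc => hne (Set.Subset.antisymm (boot_mono d r A t) hc)⟩
      have hlt : (boot d r A t).ncard < (boot d r A (t + 1)).ncard :=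
        Set.ncard_lt_ncard hss (Set.toFinite _)
      have := ih (Nat.le_of_lt ht')
      omega
  have h1 : N ≤ (boot d r A N).ncard := key N le_rfl
  calc N ≤ (boot d r A N).ncard := h1
    _ ≤ (Set.univ : Set (Cube d)).ncard :=
        Set.ncard_le_ncard (Set.subset_univ _) (Set.toFinite _)
    _ = Nat.card (Cube d) := Set.ncard_univ _

lemma percSet_nonempty (d r : ℕ) :
    {T | ∃ A : Set (Cube d), Percolates d r A ∧ percTime d r A = T}.Nonempty :=
  ⟨percTime d r Set.univ, Set.univ, ⟨0, rfl⟩, rfl⟩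

lemma percSet_bdd (d r : ℕ) :
    BddAbove {T | ∃ A : Set (Cube d), Percolates d r A ∧ percTime d r A = T} := by
  refine ⟨Nat.card (Cube d), ?_⟩
  rintro T ⟨A, hA, rfl⟩
  exact percTime_le_card hA

lemma main_ineq (d' d : ℕ) (h : d' ≤ d) :
    maxPercTime d' 3 ≤ maxPercTime d ((d - d') + 3) := by
  have hmem : maxPercTime d' 3 ∈
      {T | ∃ A : Set (Cube d'), Percolates d' 3 A ∧ percTime d' 3 A = T} :=
    Nat.sSup_mem (percSet_nonempty d' 3) (percSet_bdd d' 3)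
  obtain ⟨A, hA, hAT⟩ := hmem
  set B : Set (Cube d) := (Csub d' d)ᶜ ∪ iota d' d '' A with hB
  have htimes : ∀ t, (boot d ((d - d') + 3) B t = Set.univ ↔ boot d' 3 A t = Set.univ) := by
    intro t
    rw [hB, boot_eq h A t, union_eq_univ_iff h]
  have hBperc : Percolates d ((d - d') + 3) B := by
    obtain ⟨t, ht⟩ := hA
    exact ⟨t, (htimes t).mpr ht⟩
  have hBtime : percTime d ((d - d') + 3) B = percTime d' 3 A := by
    unfold percTime
    congr 1
    ext t
    exact htimes t
  apply le_csSup (percSet_bdd d ((d - d') + 3))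
  exact ⟨B, hBperc, by rw [hBtime, hAT]⟩

end Stmt6Aux

/-- For every `r ≥ 3` and `d ≥ r`, `M_r(d) ≥ M_3(d − r + 3)`. -/
theorem stmt6 (r d : ℕ) (hr : 3 ≤ r) (hd : r ≤ d) :
    maxPercTime (d - r + 3) 3 ≤ maxPercTime d r := by
  have h1 : d - r + 3 ≤ d := by omega
  have h2 : (d - (d - r + 3)) + 3 = r := by omega
  have h3 := Stmt6Aux.main_ineq (d - r + 3) d h1
  rwa [h2] at h3
end

section
/- Let d ≥ 15 be odd and let v* ∈ Q_d be the vertex whose only 1-coordinate is in position 10 (i.e. v* = 0^9 1 0^{d−10}). Then the set J_1 ∪ J_2 ∪ J_3 ∪ {v*} percolates under 3-neighbour bootstrap percolation on Q_d. -/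
namespace Stmt11Aux

/-- The initial set of Statement 11. -/
def Ini (d : ℕ) : Set (Cube d) := J1 d ∪ J2 d ∪ J3 d ∪ {ofOnes d {9}}

lemma boot_subset_succ (d r : ℕ) (A : Set (Cube d)) (t : ℕ) :
    boot d r A t ⊆ boot d r A (t + 1) :=
  Set.subset_union_left

lemma boot_mono (d r : ℕ) (A : Set (Cube d)) {t t' : ℕ} (h : t ≤ t') :
    boot d r A t ⊆ boot d r A t' := by
  induction t' with
  | zero => simp [Nat.le_zero.mp h]
  | succ n ih =>
      rcases Nat.lt_or_ge t (n+1) with h'|h'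
      · exact (ih (Nat.lt_succ_iff.mp h')).trans (boot_subset_succ d r A n)
      · have : t = n + 1 := le_antisymm h h'
        simp [this]

lemma mem_boot_of_mem (d r : ℕ) {A : Set (Cube d)} {v : Cube d} (h : v ∈ A) (t : ℕ) :
    v ∈ boot d r A t := boot_mono d r A (Nat.zero_le t) h

lemma step3 {d : ℕ} {A : Set (Cube d)} {t : ℕ} {v u1 u2 u3 : Cube d}
    (h1 : hammingDist u1 v = 1) (h2 : hammingDist u2 v = 1) (h3 : hammingDist u3 v = 1)
    (n12 : u1 ≠ u2) (n13 : u1 ≠ u3) (n23 : u2 ≠ u3)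
    (m1 : u1 ∈ boot d 3 A t) (m2 : u2 ∈ boot d 3 A t) (m3 : u3 ∈ boot d 3 A t) :
    v ∈ boot d 3 A (t + 1) := by
  have : v ∈ bootStep d 3 (boot d 3 A t) := by
    right
    have hsub : ({u1, u2, u3} : Set (Cube d)) ⊆
        {u : Cube d | hammingDist u v = 1 ∧ u ∈ boot d 3 A t} := by
      rintro u (rfl|rfl|rfl) <;> exact ⟨by assumption, by assumption⟩
    have hcard : ({u1, u2, u3} : Set (Cube d)).ncard = 3 := by
      rw [Set.ncard_insert_of_notMem (by simp [n12, n13]) (Set.toFinite _),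
        Set.ncard_insert_of_notMem (by simp [n23]) (Set.toFinite _), Set.ncard_singleton]
    calc (3:ℕ) = ({u1,u2,u3} : Set (Cube d)).ncard := hcard.symm
      _ ≤ _ := Set.ncard_le_ncard hsub (Set.toFinite _)
  exact this

lemma ham_insert {d k : ℕ} {s : Finset ℕ} (hk : k < d) (hks : k ∉ s) :
    hammingDist (ofOnes d (insert k s)) (ofOnes d s) = 1 := by
  have h : ({i : Fin d | ofOnes d (insert k s) i ≠ ofOnes d s i} : Finset (Fin d))
      = {⟨k, hk⟩} := by
    ext i
    simp only [Finset.mem_filter, Finset.mem_univ, true_and, Finset.mem_singleton,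
      ofOnes, ne_eq, decide_eq_decide, Finset.mem_insert, Fin.ext_iff]
    constructor
    · intro h
      by_contra hne
      exact h ⟨fun h' => h'.resolve_left hne, Or.inr⟩
    · intro h
      rw [h]
      intro hh
      exact hks (hh.mp (Or.inl rfl))
  rw [hammingDist, h, Finset.card_singleton]

/-- `u = ofOnes big` is a neighbour of `v = ofOnes s` (big = s plus one point). -/
lemma nbr {d k : ℕ} {s big : Finset ℕ} (he : big = insert k s) (hk : k < d) (hks : k ∉ s) :
    hammingDist (ofOnes d big) (ofOnes d s) = 1 := he ▸ ham_insert hk hks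

/-- `u = ofOnes small` is a neighbour of `v = ofOnes s` (s = small plus one point). -/
lemma nbr' {d k : ℕ} {s small : Finset ℕ} (he : s = insert k small) (hk : k < d)
    (hks : k ∉ small) : hammingDist (ofOnes d small) (ofOnes d s) = 1 := by
  rw [hammingDist_comm]; exact he ▸ ham_insert hk hks

lemma ofOnes_ne {d k : ℕ} {s t : Finset ℕ} (hk : k < d) (h1 : k ∈ s) (h2 : k ∉ t) :
    ofOnes d s ≠ ofOnes d t := by
  intro h
  have := congrFun h ⟨k, hk⟩
  simp [ofOnes, h1, h2] at this

lemma memIni_J1 {d : ℕ} {s : Finset ℕ} (h0 : (0:ℕ) ∈ s) (h1 : (1:ℕ) ∈ s) :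
    ofOnes d s ∈ Ini d := by
  refine Or.inl (Or.inl (Or.inl ?_))
  intro i hi
  have h : i.val = 0 ∨ i.val = 1 := by omega
  rcases h with h|h <;> simp [ofOnes, h, h0, h1]

lemma memIni_J2 {d c : ℕ} (hc : c = 0 ∨ c = 1) : ofOnes d {c, 2} ∈ Ini d := by
  rcases hc with rfl|rfl
  · exact Or.inl (Or.inl (Or.inr (Or.inl rfl)))
  · exact Or.inl (Or.inl (Or.inr (Or.inr rfl)))

lemma memIni_J3 {d c : ℕ} (l : ℕ) (hc : c = 0 ∨ c = 1) (h : 2*l+2 ≤ d-3) :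
    ofOnes d {c, 3+2*l, 4+2*l} ∈ Ini d := by
  rcases hc with rfl|rfl
  · exact Or.inl (Or.inr ⟨l, h, Or.inl rfl⟩)
  · exact Or.inl (Or.inr ⟨l, h, Or.inr rfl⟩)

lemma memIni_v {d : ℕ} : ofOnes d {9} ∈ Ini d := Or.inr rfl

end Stmt11Aux
namespace Stmt11Aux

variable {d : ℕ}

lemma L1 (hd : 15 ≤ d) {c : ℕ} (hc : c = 0 ∨ c = 1) :
    ofOnes d {c, 9} ∈ boot d 3 (Ini d) 1 := by
  refine step3 (u1 := ofOnes d {0,1,9}) (u2 := ofOnes d {9}) (u3 := ofOnes d {c,9,10})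
    ?_ ?_ ?_ ?_ ?_ ?_ ?_ ?_ ?_
  · exact nbr (k := 1-c) (by ext x; simp only [Finset.mem_insert, Finset.mem_singleton]; omega)
      (by omega) (by simp only [Finset.mem_insert, Finset.mem_singleton]; omega)
  · exact nbr' (k := c) rfl (by omega)
      (by simp only [Finset.mem_singleton]; omega)
  · exact nbr (k := 10) (by ext x; simp only [Finset.mem_insert, Finset.mem_singleton]; omega)
      (by omega) (by simp only [Finset.mem_insert, Finset.mem_singleton]; omega)
  · exact ofOnes_ne (k := 1-c) (by omega)
      (by simp only [Finset.mem_insert, Finset.mem_singleton]; omega)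
      (by simp only [Finset.mem_singleton]; omega)
  · exact ofOnes_ne (k := 1-c) (by omega)
      (by simp only [Finset.mem_insert, Finset.mem_singleton]; omega)
      (by simp only [Finset.mem_insert, Finset.mem_singleton]; omega)
  · exact (ofOnes_ne (k := 10) (by omega) (by simp)
      (by simp only [Finset.mem_singleton]; omega)).symm
  · exact mem_boot_of_mem _ _ (memIni_J1 (by simp) (by simp)) 0
  · exact mem_boot_of_mem _ _ memIni_v 0
  · refine mem_boot_of_mem _ _ ?_ 0
    have e : ({c, 9, 10} : Finset ℕ) = {c, 3+2*3, 4+2*3} := by norm_num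
    rw [e]
    exact memIni_J3 3 hc (by omega)

lemma L2 (hd : 15 ≤ d) {c : ℕ} (hc : c = 0 ∨ c = 1) :
    ofOnes d {c} ∈ boot d 3 (Ini d) 2 := by
  refine step3 (u1 := ofOnes d {0,1}) (u2 := ofOnes d {c,2}) (u3 := ofOnes d {c,9})
    ?_ ?_ ?_ ?_ ?_ ?_ ?_ ?_ ?_
  · exact nbr (k := 1-c) (by ext x; simp only [Finset.mem_insert, Finset.mem_singleton]; omega)
      (by omega) (by simp only [Finset.mem_singleton]; omega)
  · exact nbr (k := 2) (by ext x; simp only [Finset.mem_insert, Finset.mem_singleton]; omega)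
      (by omega) (by simp only [Finset.mem_singleton]; omega)
  · exact nbr (k := 9) (by ext x; simp only [Finset.mem_insert, Finset.mem_singleton]; omega)
      (by omega) (by simp only [Finset.mem_singleton]; omega)
  · exact ofOnes_ne (k := 1-c) (by omega)
      (by simp only [Finset.mem_insert, Finset.mem_singleton]; omega)
      (by simp only [Finset.mem_insert, Finset.mem_singleton]; omega)
  · exact ofOnes_ne (k := 1-c) (by omega)
      (by simp only [Finset.mem_insert, Finset.mem_singleton]; omega)
      (by simp only [Finset.mem_insert, Finset.mem_singleton]; omega)
  · exact ofOnes_ne (k := 2) (by omega) (by simp)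
      (by simp only [Finset.mem_insert, Finset.mem_singleton]; omega)
  · exact mem_boot_of_mem _ _ (memIni_J1 (by simp) (by simp)) 1
  · exact mem_boot_of_mem _ _ (memIni_J2 hc) 1
  · exact L1 hd hc

lemma L3 (hd : 15 ≤ d) : ofOnes d (∅ : Finset ℕ) ∈ boot d 3 (Ini d) 3 := by
  refine step3 (u1 := ofOnes d {0}) (u2 := ofOnes d {1}) (u3 := ofOnes d {9})
    ?_ ?_ ?_ ?_ ?_ ?_ ?_ ?_ ?_
  · exact nbr (k := 0) (by ext x; simp) (by omega) (by simp)
  · exact nbr (k := 1) (by ext x; simp) (by omega) (by simp)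
  · exact nbr (k := 9) (by ext x; simp) (by omega) (by simp)
  · exact ofOnes_ne (k := 0) (by omega) (by simp) (by simp)
  · exact ofOnes_ne (k := 0) (by omega) (by simp) (by simp)
  · exact ofOnes_ne (k := 1) (by omega) (by simp) (by simp)
  · exact L2 hd (Or.inl rfl)
  · exact L2 hd (Or.inr rfl)
  · exact mem_boot_of_mem _ _ memIni_v 2

lemma L4 (hd : 15 ≤ d) (hodd : Odd d) {c : ℕ} (hc : c = 0 ∨ c = 1)
    (i : ℕ) (hi2 : 2 ≤ i) (hid : i < d) :
    ofOnes d {c, i} ∈ boot d 3 (Ini d) 3 := by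
  rcases eq_or_lt_of_le hi2 with h2|h3
  · exact mem_boot_of_mem _ _ (h2 ▸ memIni_J2 hc) 3
  -- i ≥ 3; find the J3 pair containing i
  obtain ⟨m, hm⟩ := hodd
  have hpair : ∃ l : ℕ, 2*l+2 ≤ d-3 ∧ (i = 3+2*l ∨ i = 4+2*l) := by
    rcases Nat.even_or_odd i with ⟨mi, hmi⟩ | ⟨mi, hmi⟩
    · exact ⟨mi - 2, by omega, Or.inr (by omega)⟩
    · exact ⟨mi - 1, by omega, Or.inl (by omega)⟩
  obtain ⟨l, hl, hil⟩ := hpair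
  -- the partner j of i in the pair
  refine step3 (u1 := ofOnes d (insert (1-c) {c, i})) (u2 := ofOnes d {c})
    (u3 := ofOnes d {c, 3+2*l, 4+2*l}) ?_ ?_ ?_ ?_ ?_ ?_ ?_ ?_ ?_
  · exact nbr (k := 1-c) rfl (by omega)
      (by simp only [Finset.mem_insert, Finset.mem_singleton]; omega)
  · exact nbr' (k := i) (by ext x; simp only [Finset.mem_insert, Finset.mem_singleton]; omega)
      (by omega) (by simp only [Finset.mem_singleton]; omega)
  · rcases hil with rfl|rfl
    · exact nbr (k := 4+2*l)
        (by ext x; simp only [Finset.mem_insert, Finset.mem_singleton]; omega)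
        (by omega) (by simp only [Finset.mem_insert, Finset.mem_singleton]; omega)
    · exact nbr (k := 3+2*l)
        (by ext x; simp only [Finset.mem_insert, Finset.mem_singleton]; omega)
        (by omega) (by simp only [Finset.mem_insert, Finset.mem_singleton]; omega)
  · exact ofOnes_ne (k := 1-c) (by omega) (by simp)
      (by simp only [Finset.mem_singleton]; omega)
  · exact ofOnes_ne (k := 1-c) (by omega) (by simp)
      (by simp only [Finset.mem_insert, Finset.mem_singleton]; omega)
  · exact (ofOnes_ne (k := 3+2*l) (by omega) (by simp)
      (by simp only [Finset.mem_singleton]; omega)).symm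
  · refine mem_boot_of_mem _ _ (memIni_J1 ?_ ?_) 2 <;>
      · simp only [Finset.mem_insert, Finset.mem_singleton]; omega
  · exact L2 hd hc
  · exact mem_boot_of_mem _ _ (memIni_J3 l hc hl) 2

end Stmt11Aux
namespace Stmt11Aux

variable {d : ℕ}

lemma Lbeta (hd : 15 ≤ d) (hodd : Odd d) {c : ℕ} (hc : c = 0 ∨ c = 1) :
    ∀ s : Finset ℕ, (∀ i ∈ s, 2 ≤ i ∧ i < d) →
      ofOnes d (insert c s) ∈ boot d 3 (Ini d) (s.card + 2) := by
  intro s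
  induction s using Finset.strongInduction with
  | _ s ih =>
    intro hs
    rcases eq_or_ne s ∅ with rfl|hne
    · have e : (insert c ∅ : Finset ℕ) = {c} := rfl
      rw [e, Finset.card_empty]
      exact L2 hd hc
    rcases eq_or_ne s.card 1 with h1|h1
    · obtain ⟨i, rfl⟩ := Finset.card_eq_one.mp h1
      have hi := hs i (Finset.mem_singleton_self i)
      rw [Finset.card_singleton]
      exact L4 hd hodd hc i hi.1 hi.2
    -- |s| ≥ 2
    have hcard : 2 ≤ s.card := by
      have := Finset.card_ne_zero.mpr (Finset.nonempty_iff_ne_empty.mpr hne)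
      omega
    obtain ⟨i, hi, j, hj, hij⟩ := Finset.one_lt_card.mp hcard
    have hi2 := hs i hi
    have hj2 := hs j hj
    have hcnot : c ∉ s := fun h => by have := (hs c h).1; omega
    have key : ∀ a ∈ s, ofOnes d (insert c (s.erase a)) ∈
        boot d 3 (Ini d) (s.card - 1 + 2) := by
      intro a ha
      have := ih (s.erase a) (Finset.erase_ssubset ha)
        (fun x hx => hs x (Finset.mem_of_mem_erase hx))
      rwa [Finset.card_erase_of_mem ha] at this
    have hins : ∀ a ∈ s, insert c s = insert a (insert c (s.erase a)) := by
      intro a ha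
      rw [Finset.insert_comm, Finset.insert_erase ha]
    have hstep : ofOnes d (insert c s) ∈ boot d 3 (Ini d) ((s.card + 1) + 1) := by
      refine step3 (u1 := ofOnes d (insert (1-c) (insert c s)))
        (u2 := ofOnes d (insert c (s.erase i)))
        (u3 := ofOnes d (insert c (s.erase j))) ?_ ?_ ?_ ?_ ?_ ?_ ?_ ?_ ?_
      · refine nbr (k := 1-c) rfl (by omega) ?_
        intro h
        rcases Finset.mem_insert.mp h with h|h
        · omega
        · have := (hs _ h).1; omega
      · refine nbr' (k := i) (hins i hi) hi2.2 ?_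
        intro h
        rcases Finset.mem_insert.mp h with h|h
        · omega
        · exact absurd rfl (Finset.ne_of_mem_erase h)
      · refine nbr' (k := j) (hins j hj) hj2.2 ?_
        intro h
        rcases Finset.mem_insert.mp h with h|h
        · omega
        · exact absurd rfl (Finset.ne_of_mem_erase h)
      · refine ofOnes_ne (k := 1-c) (by omega) (Finset.mem_insert_self _ _) ?_
        intro h
        rcases Finset.mem_insert.mp h with h|h
        · omega
        · have := (hs _ (Finset.mem_of_mem_erase h)).1; omega
      · refine ofOnes_ne (k := 1-c) (by omega) (Finset.mem_insert_self _ _) ?_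
        intro h
        rcases Finset.mem_insert.mp h with h|h
        · omega
        · have := (hs _ (Finset.mem_of_mem_erase h)).1; omega
      · refine (ofOnes_ne (k := i) hi2.2
          (Finset.mem_insert_of_mem (Finset.mem_erase.mpr ⟨hij, hi⟩)) ?_).symm
        intro h
        rcases Finset.mem_insert.mp h with h|h
        · omega
        · exact absurd rfl (Finset.ne_of_mem_erase h)
      · refine mem_boot_of_mem _ _ (memIni_J1 ?_ ?_) _ <;>
          · rcases hc with rfl|rfl <;> simp
      · exact boot_mono _ _ _ (by omega) (key i hi)
      · exact boot_mono _ _ _ (by omega) (key j hj)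
    have : s.card + 1 + 1 = s.card + 2 := by omega
    rwa [this] at hstep

lemma Lalpha (hd : 15 ≤ d) (hodd : Odd d) :
    ∀ s : Finset ℕ, (∀ i ∈ s, 2 ≤ i ∧ i < d) →
      ofOnes d s ∈ boot d 3 (Ini d) (s.card + 3) := by
  intro s
  induction s using Finset.strongInduction with
  | _ s ih =>
    intro hs
    rcases eq_or_ne s ∅ with rfl|hne
    · rw [Finset.card_empty]
      exact L3 hd
    obtain ⟨i, hi⟩ := Finset.nonempty_iff_ne_empty.mpr hne
    have hi2 := hs i hi
    have h0 : (0:ℕ) ∉ s := fun h => by have := (hs 0 h).1; omega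
    have h1 : (1:ℕ) ∉ s := fun h => by have := (hs 1 h).1; omega
    have hstep : ofOnes d s ∈ boot d 3 (Ini d) ((s.card + 2) + 1) := by
      refine step3 (u1 := ofOnes d (insert 0 s)) (u2 := ofOnes d (insert 1 s))
        (u3 := ofOnes d (s.erase i)) ?_ ?_ ?_ ?_ ?_ ?_ ?_ ?_ ?_
      · exact nbr (k := 0) rfl (by omega) h0
      · exact nbr (k := 1) rfl (by omega) h1
      · refine nbr' (k := i) (Finset.insert_erase hi).symm hi2.2
          (fun h => absurd rfl (Finset.ne_of_mem_erase h))
      · refine ofOnes_ne (k := 0) (by omega) (Finset.mem_insert_self _ _) ?_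
        intro h
        rcases Finset.mem_insert.mp h with h|h
        · omega
        · exact h0 h
      · exact ofOnes_ne (k := 0) (by omega) (Finset.mem_insert_self _ _)
          (fun h => h0 (Finset.mem_of_mem_erase h))
      · exact ofOnes_ne (k := 1) (by omega) (Finset.mem_insert_self _ _)
          (fun h => h1 (Finset.mem_of_mem_erase h))
      · exact Lbeta hd hodd (Or.inl rfl) s hs
      · exact Lbeta hd hodd (Or.inr rfl) s hs
      · have := ih (s.erase i) (Finset.erase_ssubset hi)
          (fun x hx => hs x (Finset.mem_of_mem_erase hx))
        rw [Finset.card_erase_of_mem hi] at this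
        exact boot_mono _ _ _ (by
          have := Finset.card_ne_zero.mpr (Finset.nonempty_iff_ne_empty.mpr hne)
          omega) this
    have : s.card + 2 + 1 = s.card + 3 := by omega
    rwa [this] at hstep

end Stmt11Aux

/-- For odd `d ≥ 15`, with `v*` the vertex whose only `1`-coordinate is
in (1-indexed) position 10, the set `J_1 ∪ J_2 ∪ J_3 ∪ {v*}` percolates under 3-neighbour
bootstrap percolation on `Q_d`. -/
theorem stmt11 (d : ℕ) (hd : 15 ≤ d) (hodd : Odd d) :
    Percolates d 3 (J1 d ∪ J2 d ∪ J3 d ∪ {ofOnes d {9}}) := by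
  show Percolates d 3 (Stmt11Aux.Ini d)
  refine ⟨d + 3, Set.eq_univ_iff_forall.mpr fun v => ?_⟩
  classical
  set s : Finset ℕ := Finset.image Fin.val (Finset.univ.filter (fun i => v i = true)) with hsdef
  have hmem : ∀ i : Fin d, (i.val ∈ s) ↔ v i = true := by
    intro i
    simp only [hsdef, Finset.mem_image, Finset.mem_filter, Finset.mem_univ, true_and]
    constructor
    · rintro ⟨a, ha, hav⟩
      rwa [Fin.val_injective hav] at ha
    · exact fun h => ⟨i, h, rfl⟩
  have hv : v = ofOnes d s := by
    funext i
    by_cases h : v i = true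
    · simp [ofOnes, (hmem i).mpr h, h]
    · have h' : i.val ∉ s := fun hc => h ((hmem i).mp hc)
      simp only [Bool.not_eq_true] at h
      simp [ofOnes, h', h]
  have hlt : ∀ i ∈ s, i < d := by
    intro i hi
    simp only [hsdef, Finset.mem_image, Finset.mem_filter] at hi
    obtain ⟨a, _, rfl⟩ := hi
    exact a.isLt
  have hcard : s.card ≤ d := by
    calc s.card ≤ (Finset.univ.filter (fun i => v i = true)).card := Finset.card_image_le
      _ ≤ Finset.univ.card := Finset.card_filter_le _ _
      _ = d := by simp
  rw [hv]
  by_cases h0 : (0:ℕ) ∈ s <;> by_cases h1 : (1:ℕ) ∈ s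
  · exact Stmt11Aux.mem_boot_of_mem _ _ (Stmt11Aux.memIni_J1 h0 h1) _
  · -- 0 ∈ s, 1 ∉ s
    have he : s = insert 0 (s.erase 0) := (Finset.insert_erase h0).symm
    have hb : ∀ i ∈ s.erase 0, 2 ≤ i ∧ i < d := by
      intro i hi
      have hne0 := Finset.ne_of_mem_erase hi
      have his := Finset.mem_of_mem_erase hi
      have hne1 : i ≠ 1 := fun h => h1 (h ▸ his)
      exact ⟨by omega, hlt i his⟩
    have := Stmt11Aux.Lbeta hd hodd (Or.inl rfl) (s.erase 0) hb
    rw [← he] at this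
    refine Stmt11Aux.boot_mono _ _ _ ?_ this
    have := Finset.card_erase_of_mem h0
    omega
  · have he : s = insert 1 (s.erase 1) := (Finset.insert_erase h1).symm
    have hb : ∀ i ∈ s.erase 1, 2 ≤ i ∧ i < d := by
      intro i hi
      have hne1 := Finset.ne_of_mem_erase hi
      have his := Finset.mem_of_mem_erase hi
      have hne0 : i ≠ 0 := fun h => h0 (h ▸ his)
      exact ⟨by omega, hlt i his⟩
    have := Stmt11Aux.Lbeta hd hodd (Or.inr rfl) (s.erase 1) hb
    rw [← he] at this
    refine Stmt11Aux.boot_mono _ _ _ ?_ this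
    have := Finset.card_erase_of_mem h1
    omega
  · have hb : ∀ i ∈ s, 2 ≤ i ∧ i < d := by
      intro i hi
      have hne0 : i ≠ 0 := fun h => h0 (h ▸ hi)
      have hne1 : i ≠ 1 := fun h => h1 (h ▸ hi)
      exact ⟨by omega, hlt i hi⟩
    exact Stmt11Aux.boot_mono _ _ _ (by omega) (Stmt11Aux.Lalpha hd hodd s hb)
end

section
/- Let d ≥ 15 be odd, d'' = d − 9, and let S be a 3-snake of length T in Q_{d''} satisfying the five snake conditions. Then the set I' = I_0 ∪ J_1 ∪ J_2 ∪ J_3 is stable under 3-neighbour bootstrap percolation on Q_d: no vertex outside I' has three or more neighbours in I' (equivalently, A_1 = A_0 for the process started from A_0 = I'). -/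
section AuxStmt13

/-- Two booleans different from a third are equal. -/
lemma bool_ne_ne {a b c : Bool} (h1 : a ≠ c) (h2 : b ≠ c) : a = b := by
  revert h1 h2; cases a <;> cases b <;> cases c <;> simp

/-- A vertex at Hamming distance 1 is a flip at one coordinate. -/
lemma cube_exists_flip {n : ℕ} {u v : Cube n} (h : hammingDist u v = 1) :
    ∃ m : Fin n, u m ≠ v m ∧ ∀ c, c ≠ m → u c = v c := by
  have h' : (Finset.univ.filter fun i => u i ≠ v i).card = 1 := h
  rw [Finset.card_eq_one] at h'
  obtain ⟨m, hm⟩ := h'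
  refine ⟨m, ?_, ?_⟩
  · have : m ∈ (Finset.univ.filter fun i => u i ≠ v i) := by
      rw [hm]; exact Finset.mem_singleton_self m
    simpa using this
  · intro c hc
    by_contra hne
    have : c ∈ (Finset.univ.filter fun i => u i ≠ v i) := by simpa using hne
    rw [hm, Finset.mem_singleton] at this
    exact hc this

lemma diff_char {n : ℕ} {u u' v : Cube n} {m m' : Fin n} (hne : m ≠ m')
    (h1 : u m ≠ v m) (h1o : ∀ c, c ≠ m → u c = v c)
    (h2 : u' m' ≠ v m') (h2o : ∀ c, c ≠ m' → u' c = v c) :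
    ∀ c, u c ≠ u' c ↔ (c = m ∨ c = m') := by
  intro c
  constructor
  · intro h
    by_contra hc
    push_neg at hc
    rw [h1o c hc.1, h2o c hc.2] at h
    exact h rfl
  · rintro (rfl | rfl)
    · rw [h2o c hne]; exact h1
    · rw [h1o c (Ne.symm hne)]; exact Ne.symm h2

lemma dist_eq_two {n : ℕ} {x y : Cube n} {a b : Fin n} (hab : a ≠ b)
    (h : ∀ c, x c ≠ y c ↔ (c = a ∨ c = b)) : hammingDist x y = 2 := by
  have hs : (Finset.univ.filter fun i => x i ≠ y i) = {a, b} := by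
    ext c
    simp [h c]
  show (Finset.univ.filter fun i => x i ≠ y i).card = 2
  rw [hs, Finset.card_pair hab]

lemma wt_eq_two {n : ℕ} {x : Cube n} {a b : Fin n} (hab : a ≠ b)
    (ha : x a = true) (hb : x b = true) (ho : ∀ c, c ≠ a → c ≠ b → x c = false) :
    wt x = 2 := by
  refine dist_eq_two hab (fun c => ?_)
  constructor
  · intro h
    by_contra hc
    push_neg at hc
    exact h (by rw [ho c hc.1 hc.2])
  · rintro (rfl | rfl) <;> simp [ha, hb]

lemma diff_val {n : ℕ} {u u' : Cube n} {m m' : Fin n}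
    (hD : ∀ c, u c ≠ u' c ↔ (c = m ∨ c = m')) {k : ℕ} (hk : k < n)
    (h : u ⟨k, hk⟩ ≠ u' ⟨k, hk⟩) : m.val = k ∨ m'.val = k := by
  rcases (hD _).1 h with h' | h'
  · exact Or.inl (congrArg Fin.val h').symm
  · exact Or.inr (congrArg Fin.val h').symm

lemma eq_of_not_diff {n : ℕ} {u u' : Cube n} {m m' : Fin n}
    (hD : ∀ c, u c ≠ u' c ↔ (c = m ∨ c = m')) {k : ℕ} (hk : k < n)
    (h1 : m.val ≠ k) (h2 : m'.val ≠ k) : u ⟨k, hk⟩ = u' ⟨k, hk⟩ := by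
  by_contra hc
  rcases (hD _).1 hc with h' | h'
  · exact h1 (congrArg Fin.val h').symm
  · exact h2 (congrArg Fin.val h').symm

lemma embed9_lt {d : ℕ} {ys : Finset ℕ} {x : Cube (d - 9)} {c : Fin d} (h : c.val < 9) :
    embed9 d ys x c = decide (c.val ∈ ys) := dif_pos h

lemma embed9_tail {d : ℕ} {ys : Finset ℕ} {x : Cube (d - 9)} (c : Fin (d - 9))
    (hc : 9 + c.val < d) : embed9 d ys x ⟨9 + c.val, hc⟩ = x c := by
  have h9 : ¬ ((⟨9 + c.val, hc⟩ : Fin d).val < 9) := by simp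
  rw [embed9, dif_neg h9]
  congr 1
  exact Fin.ext (by simp)

/-! Snake tail lemmas -/

lemma tail_ne_empty {n T : ℕ} {S : ℕ → Cube n} (hS : IsSnake n 3 T S)
    (hc : SnakeConds n T S) {i : ℕ} {x : Cube n} (hi : 1 ≤ i)
    (hx : x ∈ SnakeTail n T S i) : x ≠ ofOnes n ∅ := by
  obtain ⟨j, hj, rfl⟩ := hx
  intro h
  have := hS.2.1 (T - i - 3 * j) T (by omega) le_rfl (by rw [h, hc.1])
  omega

lemma tail_disjoint {n T : ℕ} {S : ℕ → Cube n} (hS : IsSnake n 3 T S)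
    {i i' : ℕ} {x : Cube n} (hi1 : 1 ≤ i) (hi3 : i ≤ 3) (hi1' : 1 ≤ i') (hi3' : i' ≤ 3)
    (hx : x ∈ SnakeTail n T S i) (hx' : x ∈ SnakeTail n T S i') : i = i' := by
  obtain ⟨j, hj, rfl⟩ := hx
  obtain ⟨j', hj', hx'⟩ := hx'
  have := hS.2.1 _ _ (by omega) (by omega) hx'
  omega

lemma tail_dist {n T : ℕ} {S : ℕ → Cube n} (hS : IsSnake n 3 T S)
    {i : ℕ} {x x' : Cube n} (hx : x ∈ SnakeTail n T S i) (hx' : x' ∈ SnakeTail n T S i)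
    (hne : x ≠ x') : 3 ≤ hammingDist x x' := by
  obtain ⟨j, hj, rfl⟩ := hx
  obtain ⟨j', hj', rfl⟩ := hx'
  have hjj : j ≠ j' := by rintro rfl; exact hne rfl
  rcases Nat.lt_or_ge j j' with h | h
  · have h3 := hS.2.2 (T - i - 3 * j') (T - i - 3 * j) (by omega) (by omega)
    rwa [hammingDist_comm]
  · exact hS.2.2 (T - i - 3 * j) (T - i - 3 * j') (by omega) (by omega)

lemma tail_two_ones {n T : ℕ} {S : ℕ → Cube n} (hS : IsSnake n 3 T S)
    (hcd : SnakeConds n T S) {i : ℕ} {x : Cube n} (hi1 : 1 ≤ i) (hi3 : i ≤ 3)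
    (hx : x ∈ SnakeTail n T S i) {c e : Fin n} (hce : e.val = c.val + 1)
    (hc1 : x c = true) (he1 : x e = true)
    (ho : ∀ f, f ≠ c → f ≠ e → x f = false) : False := by
  have hcne : c ≠ e := by
    intro h
    rw [h] at hce
    omega
  obtain ⟨j, hj, hxe⟩ := hx
  rcases Nat.eq_zero_or_pos j with rfl | hj1
  · have hi123 : i = 1 ∨ i = 2 ∨ i = 3 := by omega
    rcases hi123 with rfl | rfl | rfl
    · rw [show T - 1 - 3 * 0 = T - 1 by omega, hcd.2.1] at hxe
      rw [hxe] at hc1 he1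
      simp [ofOnes] at hc1 he1
      omega
    · rw [show T - 2 - 3 * 0 = T - 2 by omega, hcd.2.2.1] at hxe
      rw [hxe] at hc1 he1
      simp [ofOnes] at hc1 he1
      omega
    · rw [show T - 3 - 3 * 0 = T - 3 by omega, hcd.2.2.2.1] at hxe
      rw [hxe] at hc1 he1
      simp [ofOnes] at hc1 he1
      omega
  · have hlt : T - i - 3 * j < T - 3 := by omega
    have hbig := hcd.2.2.2.2 _ hlt
    have hw : wt x = 2 := wt_eq_two hcne hc1 he1 ho
    rw [hxe] at hw
    omega

/-! Elimination lemmas for the pieces -/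

lemma I0_elim {d T : ℕ} {S : ℕ → Cube (d - 9)} {u : Cube d} (h : u ∈ I0 d T S) :
    ∃ i p x, 1 ≤ i ∧ i ≤ 3 ∧ (p = 2 * i + 1 ∨ p = 2 * i + 2) ∧
      x ∈ SnakeTail (d - 9) T S i ∧ u = embed9 d {p} x := by
  obtain ⟨i, hi, x, hx, hu⟩ := h
  simp only [Set.mem_insert_iff, Set.mem_singleton_iff] at hi
  have hi1 : 1 ≤ i := by omega
  have hi3 : i ≤ 3 := by omega
  rcases hu with rfl | rfl
  · exact ⟨i, 2 * i + 1, x, hi1, hi3, Or.inl rfl, hx, rfl⟩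
  · exact ⟨i, 2 * i + 2, x, hi1, hi3, Or.inr rfl, hx, rfl⟩

lemma J2_elim {d : ℕ} {u : Cube d} (h : u ∈ J2 d) :
    ∃ b, b ≤ 1 ∧ u = ofOnes d {b, 2} := by
  rcases h with rfl | rfl
  · exact ⟨0, by omega, rfl⟩
  · exact ⟨1, by omega, rfl⟩

lemma J3_elim {d : ℕ} {u : Cube d} (h : u ∈ J3 d) :
    ∃ b l, b ≤ 1 ∧ 2 * l + 2 ≤ d - 3 ∧ u = ofOnes d {b, 3 + 2 * l, 4 + 2 * l} := by
  obtain ⟨l, hl, h⟩ := h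
  rcases h with rfl | rfl
  · exact ⟨0, l, by omega, hl, rfl⟩
  · exact ⟨1, l, by omega, hl, rfl⟩

lemma I0_first {d T : ℕ} {S : ℕ → Cube (d - 9)} {u : Cube d} (h : u ∈ I0 d T S)
    {c : Fin d} (hc : c.val < 3) : u c = false := by
  obtain ⟨i, p, x, hi1, hi3, hp, hx, rfl⟩ := I0_elim h
  rw [embed9_lt (by omega)]
  simp only [Finset.mem_singleton, decide_eq_false_iff_not]
  omega

/-! Pairwise lemmas -/

lemma pair_I0_I0 {d : ℕ} (hd : 15 ≤ d) {T : ℕ} {S : ℕ → Cube (d - 9)}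
    (hS : IsSnake (d - 9) 3 T S) {u u' : Cube d}
    (hu : u ∈ I0 d T S) (hu' : u' ∈ I0 d T S) (hne : u ≠ u') {m m' : Fin d}
    (hmm : m ≠ m') (hD : ∀ c, u c ≠ u' c ↔ (c = m ∨ c = m')) :
    ∃ a, 1 ≤ a ∧ a ≤ 3 ∧
      ((m.val = 2 * a + 1 ∧ m'.val = 2 * a + 2) ∨
       (m.val = 2 * a + 2 ∧ m'.val = 2 * a + 1)) := by
  obtain ⟨i, p, x, hi1, hi3, hp, hx, rfl⟩ := I0_elim hu
  obtain ⟨i', p', x', hi1', hi3', hp', hx', rfl⟩ := I0_elim hu'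
  have hmv : m.val ≠ m'.val := fun h => hmm (Fin.ext h)
  by_cases hpp : p = p'
  · subst hpp
    have hii : i = i' := by omega
    subst hii
    have hm9 : ¬ m.val < 9 := by
      intro h9
      have hh := (hD m).2 (Or.inl rfl)
      rw [embed9_lt h9, embed9_lt h9] at hh
      exact hh rfl
    have hm9' : ¬ m'.val < 9 := by
      intro h9
      have hh := (hD m').2 (Or.inr rfl)
      rw [embed9_lt h9, embed9_lt h9] at hh
      exact hh rfl
    have hxx : x ≠ x' := by rintro rfl; exact hne rfl
    set a : Fin (d - 9) := ⟨m.val - 9, by have := m.isLt; omega⟩ with ha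
    set b : Fin (d - 9) := ⟨m'.val - 9, by have := m'.isLt; omega⟩ with hb
    have hab : a ≠ b := by
      intro h
      have := congrArg Fin.val h
      simp [ha, hb] at this
      omega
    have hchar : ∀ c : Fin (d - 9), x c ≠ x' c ↔ (c = a ∨ c = b) := by
      intro c
      have hc9 : 9 + c.val < d := by have := c.isLt; omega
      have hh := hD ⟨9 + c.val, hc9⟩
      rw [embed9_tail c hc9, embed9_tail c hc9] at hh
      constructor
      · intro hxc
        rcases hh.1 hxc with h | h
        · left; apply Fin.ext
          have := congrArg Fin.val h
          simp [ha] at this ⊢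
          omega
        · right; apply Fin.ext
          have := congrArg Fin.val h
          simp [hb] at this ⊢
          omega
      · rintro (rfl | rfl)
        · apply hh.2; left; apply Fin.ext; simp [ha]; omega
        · apply hh.2; right; apply Fin.ext; simp [hb]; omega
    have h2 := dist_eq_two hab hchar
    have h3 := tail_dist hS hx hx' hxx
    omega
  · have hp8 : p < 9 := by omega
    have hp8' : p' < 9 := by omega
    have hd1 : m.val = p ∨ m'.val = p := by
      refine diff_val hD (by omega) ?_
      rw [embed9_lt (by simpa using hp8), embed9_lt (by simpa using hp8)]
      simp only [Fin.val_mk, Finset.mem_singleton, ne_eq, decide_eq_decide, true_iff, iff_true, false_iff, iff_false, true_or, or_true, false_or, or_false]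
      omega
    have hd2 : m.val = p' ∨ m'.val = p' := by
      refine diff_val hD (by omega) ?_
      rw [embed9_lt (by simpa using hp8'), embed9_lt (by simpa using hp8')]
      simp only [Fin.val_mk, Finset.mem_singleton, ne_eq, decide_eq_decide, true_iff, iff_true, false_iff, iff_false, true_or, or_true, false_or, or_false]
      omega
    have hxe : x = x' := by
      funext c
      have hc9 : 9 + c.val < d := by have := c.isLt; omega
      have heq := eq_of_not_diff hD hc9 (by omega) (by omega)
      rwa [embed9_tail c hc9, embed9_tail c hc9] at heq
    subst hxe
    have hii : i = i' := tail_disjoint hS hi1 hi3 hi1' hi3' hx hx'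
    exact ⟨i, hi1, hi3, by omega⟩

lemma pair_I0_J2 {d : ℕ} (hd : 15 ≤ d) {T : ℕ} {S : ℕ → Cube (d - 9)}
    {u u' : Cube d} (hu : u ∈ I0 d T S) (hu' : u' ∈ J2 d) {m m' : Fin d}
    (hmm : m ≠ m') (hD : ∀ c, u c ≠ u' c ↔ (c = m ∨ c = m')) : False := by
  obtain ⟨i, p, x, hi1, hi3, hp, hx, rfl⟩ := I0_elim hu
  obtain ⟨b, hb, rfl⟩ := J2_elim hu'
  have hmv : m.val ≠ m'.val := fun h => hmm (Fin.ext h)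
  have h1 : m.val = b ∨ m'.val = b := by
    refine diff_val hD (by omega) ?_
    rw [embed9_lt (by simpa using show b < 9 by omega)]
    simp only [ofOnes, Fin.val_mk, Finset.mem_singleton, Finset.mem_insert, ne_eq, decide_eq_decide, true_iff, iff_true, false_iff, iff_false, true_or, or_true, false_or, or_false]
    omega
  have h2 : m.val = 2 ∨ m'.val = 2 := by
    refine diff_val hD (by omega) ?_
    rw [embed9_lt (by simpa using show (2:ℕ) < 9 by omega)]
    simp only [ofOnes, Fin.val_mk, Finset.mem_singleton, Finset.mem_insert, ne_eq, decide_eq_decide, true_iff, iff_true, false_iff, iff_false, true_or, or_true, false_or, or_false]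
    omega
  have h3 : m.val = p ∨ m'.val = p := by
    refine diff_val hD (by omega) ?_
    rw [embed9_lt (by simpa using show p < 9 by omega)]
    simp only [ofOnes, Fin.val_mk, Finset.mem_singleton, Finset.mem_insert, ne_eq, decide_eq_decide, true_iff, iff_true, false_iff, iff_false, true_or, or_true, false_or, or_false]
    omega
  omega

lemma pair_I0_J3 {d : ℕ} (hd : 15 ≤ d) {T : ℕ} {S : ℕ → Cube (d - 9)}
    (hS : IsSnake (d - 9) 3 T S) (hcd : SnakeConds (d - 9) T S)
    {u u' : Cube d} (hu : u ∈ I0 d T S) (hu' : u' ∈ J3 d) {m m' : Fin d}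
    (hmm : m ≠ m') (hD : ∀ c, u c ≠ u' c ↔ (c = m ∨ c = m')) : False := by
  obtain ⟨i, p, x, hi1, hi3, hp, hx, rfl⟩ := I0_elim hu
  obtain ⟨b, l, hb, hl, rfl⟩ := J3_elim hu'
  have hmv : m.val ≠ m'.val := fun h => hmm (Fin.ext h)
  have hq1 : 4 + 2 * l < d := by omega
  have hdb : m.val = b ∨ m'.val = b := by
    refine diff_val hD (by omega) ?_
    rw [embed9_lt (by simpa using show b < 9 by omega)]
    simp only [ofOnes, Fin.val_mk, Finset.mem_singleton, Finset.mem_insert, ne_eq, decide_eq_decide, true_iff, iff_true, false_iff, iff_false, true_or, or_true, false_or, or_false]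
    omega
  by_cases hpq : p = 3 + 2 * l ∨ p = 4 + 2 * l
  · -- p coincides with one of the pair; the other is a difference below 9, tail is empty
    have hr : ∃ r, r < 9 ∧ r ≠ p ∧ (r = 3 + 2 * l ∨ r = 4 + 2 * l) := by
      rcases hpq with h | h
      · exact ⟨4 + 2 * l, by omega, by omega, Or.inr rfl⟩
      · exact ⟨3 + 2 * l, by omega, by omega, Or.inl rfl⟩
    obtain ⟨r, hr9, hrp, hrq⟩ := hr
    have hdr : m.val = r ∨ m'.val = r := by
      refine diff_val hD (by omega) ?_
      rw [embed9_lt (by simpa using hr9)]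
      simp only [ofOnes, Fin.val_mk, Finset.mem_singleton, Finset.mem_insert, ne_eq, decide_eq_decide, true_iff, iff_true, false_iff, iff_false, true_or, or_true, false_or, or_false]
      omega
    have hxz : x = ofOnes (d - 9) ∅ := by
      funext c
      have hc9 : 9 + c.val < d := by have := c.isLt; omega
      have heq := eq_of_not_diff hD hc9 (by omega) (by omega)
      rw [embed9_tail c hc9] at heq
      rw [heq]
      simp only [ofOnes, Fin.val_mk, Finset.mem_singleton, Finset.mem_insert, Finset.notMem_empty,
        decide_eq_false_iff_not, decide_false]
      push_neg
      refine ⟨by omega, by omega, by omega⟩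
    exact tail_ne_empty hS hcd hi1 hx hxz
  · push_neg at hpq
    have hdp : m.val = p ∨ m'.val = p := by
      refine diff_val hD (by omega) ?_
      rw [embed9_lt (by simpa using show p < 9 by omega)]
      simp only [ofOnes, Fin.val_mk, Finset.mem_singleton, Finset.mem_insert, ne_eq, decide_eq_decide, true_iff, iff_true, false_iff, iff_false, true_or, or_true, false_or, or_false]
      omega
    by_cases hq9 : 3 + 2 * l < 9
    · have hdq : m.val = 3 + 2 * l ∨ m'.val = 3 + 2 * l := by
        refine diff_val hD (by omega) ?_
        rw [embed9_lt (by simpa using hq9)]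
        simp only [ofOnes, Fin.val_mk, Finset.mem_singleton, Finset.mem_insert, ne_eq, decide_eq_decide, true_iff, iff_true, false_iff, iff_false, true_or, or_true, false_or, or_false]
        omega
      omega
    · -- tail of u has exactly two (consecutive) ones
      set c1 : Fin (d - 9) := ⟨3 + 2 * l - 9, by omega⟩ with hc1d
      set c2 : Fin (d - 9) := ⟨4 + 2 * l - 9, by omega⟩ with hc2d
      have hx1 : x c1 = true := by
        have hcv : 9 + c1.val < d := by simp [hc1d]; omega
        have heq := eq_of_not_diff hD hcv (by simp [hc1d]; omega) (by simp [hc1d]; omega)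
        rw [embed9_tail c1 hcv] at heq
        rw [heq]
        simp only [ofOnes, Fin.val_mk, Finset.mem_singleton, Finset.mem_insert, decide_eq_true_eq, hc1d]
        omega
      have hx2 : x c2 = true := by
        have hcv : 9 + c2.val < d := by simp [hc2d]; omega
        have heq := eq_of_not_diff hD hcv (by simp [hc2d]; omega) (by simp [hc2d]; omega)
        rw [embed9_tail c2 hcv] at heq
        rw [heq]
        simp only [ofOnes, Fin.val_mk, Finset.mem_singleton, Finset.mem_insert, decide_eq_true_eq, hc2d]
        omega
      have ho : ∀ f : Fin (d - 9), f ≠ c1 → f ≠ c2 → x f = false := by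
        intro f hf1 hf2
        have hf1' : f.val ≠ 3 + 2 * l - 9 := fun h => hf1 (Fin.ext h)
        have hf2' : f.val ≠ 4 + 2 * l - 9 := fun h => hf2 (Fin.ext h)
        have hfv : 9 + f.val < d := by have := f.isLt; omega
        have heq := eq_of_not_diff hD hfv (by omega) (by omega)
        rw [embed9_tail f hfv] at heq
        rw [heq]
        simp only [ofOnes, Fin.val_mk, Finset.mem_singleton, Finset.mem_insert, decide_eq_false_iff_not]
        push_neg
        refine ⟨by omega, by omega, by omega⟩
      exact tail_two_ones hS hcd hi1 hi3 hx (show c2.val = c1.val + 1 by simp [hc1d, hc2d]; omega)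
        hx1 hx2 ho

lemma pair_J2_J2 {d : ℕ} (hd : 15 ≤ d) {u u' : Cube d} (hu : u ∈ J2 d) (hu' : u' ∈ J2 d)
    (hne : u ≠ u') {m m' : Fin d} (hmm : m ≠ m')
    (hD : ∀ c, u c ≠ u' c ↔ (c = m ∨ c = m')) :
    (m.val = 0 ∧ m'.val = 1) ∨ (m.val = 1 ∧ m'.val = 0) := by
  obtain ⟨b, hb, rfl⟩ := J2_elim hu
  obtain ⟨b', hb', rfl⟩ := J2_elim hu'
  have hbb : b ≠ b' := by
    rintro rfl
    exact hne rfl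
  have hmv : m.val ≠ m'.val := fun h => hmm (Fin.ext h)
  have h0 : m.val = b ∨ m'.val = b := by
    refine diff_val hD (by omega) ?_
    simp only [ofOnes, Fin.val_mk, Finset.mem_singleton, Finset.mem_insert, ne_eq, decide_eq_decide, true_iff, iff_true, false_iff, iff_false, true_or, or_true, false_or, or_false]
    omega
  have h1 : m.val = b' ∨ m'.val = b' := by
    refine diff_val hD (by omega) ?_
    simp only [ofOnes, Fin.val_mk, Finset.mem_singleton, Finset.mem_insert, ne_eq, decide_eq_decide, true_iff, iff_true, false_iff, iff_false, true_or, or_true, false_or, or_false]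
    omega
  omega

lemma pair_J2_J3 {d : ℕ} (hd : 15 ≤ d) {u u' : Cube d} (hu : u ∈ J2 d) (hu' : u' ∈ J3 d)
    {m m' : Fin d} (hmm : m ≠ m')
    (hD : ∀ c, u c ≠ u' c ↔ (c = m ∨ c = m')) : False := by
  obtain ⟨b, hb, rfl⟩ := J2_elim hu
  obtain ⟨b', l, hb', hl, rfl⟩ := J3_elim hu'
  have hmv : m.val ≠ m'.val := fun h => hmm (Fin.ext h)
  have h2 : m.val = 2 ∨ m'.val = 2 := by
    refine diff_val hD (by omega) ?_
    simp only [ofOnes, Fin.val_mk, Finset.mem_singleton, Finset.mem_insert, ne_eq, decide_eq_decide, true_iff, iff_true, false_iff, iff_false, true_or, or_true, false_or, or_false]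
    omega
  have hq : m.val = 3 + 2 * l ∨ m'.val = 3 + 2 * l := by
    refine diff_val hD (by omega) ?_
    simp only [ofOnes, Fin.val_mk, Finset.mem_singleton, Finset.mem_insert, ne_eq, decide_eq_decide, true_iff, iff_true, false_iff, iff_false, true_or, or_true, false_or, or_false]
    omega
  have hq1 : m.val = 4 + 2 * l ∨ m'.val = 4 + 2 * l := by
    refine diff_val hD (by omega) ?_
    simp only [ofOnes, Fin.val_mk, Finset.mem_singleton, Finset.mem_insert, ne_eq, decide_eq_decide, true_iff, iff_true, false_iff, iff_false, true_or, or_true, false_or, or_false]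
    omega
  omega

lemma pair_J3_J3 {d : ℕ} (hd : 15 ≤ d) {u u' : Cube d} (hu : u ∈ J3 d) (hu' : u' ∈ J3 d)
    (hne : u ≠ u') {m m' : Fin d} (hmm : m ≠ m')
    (hD : ∀ c, u c ≠ u' c ↔ (c = m ∨ c = m')) :
    (m.val = 0 ∧ m'.val = 1) ∨ (m.val = 1 ∧ m'.val = 0) := by
  obtain ⟨b, l, hb, hl, rfl⟩ := J3_elim hu
  obtain ⟨b', l', hb', hl', rfl⟩ := J3_elim hu'
  have hmv : m.val ≠ m'.val := fun h => hmm (Fin.ext h)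
  by_cases hll : l = l'
  · subst hll
    have hbb : b ≠ b' := by rintro rfl; exact hne rfl
    have h0 : m.val = b ∨ m'.val = b := by
      refine diff_val hD (by omega) ?_
      simp only [ofOnes, Fin.val_mk, Finset.mem_singleton, Finset.mem_insert, ne_eq, decide_eq_decide, true_iff, iff_true, false_iff, iff_false, true_or, or_true, false_or, or_false]
      omega
    have h1 : m.val = b' ∨ m'.val = b' := by
      refine diff_val hD (by omega) ?_
      simp only [ofOnes, Fin.val_mk, Finset.mem_singleton, Finset.mem_insert, ne_eq, decide_eq_decide, true_iff, iff_true, false_iff, iff_false, true_or, or_true, false_or, or_false]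
      omega
    omega
  · have hq : m.val = 3 + 2 * l ∨ m'.val = 3 + 2 * l := by
      refine diff_val hD (by omega) ?_
      simp only [ofOnes, Fin.val_mk, Finset.mem_singleton, Finset.mem_insert, ne_eq, decide_eq_decide, true_iff, iff_true, false_iff, iff_false, true_or, or_true, false_or, or_false]
      omega
    have hq1 : m.val = 4 + 2 * l ∨ m'.val = 4 + 2 * l := by
      refine diff_val hD (by omega) ?_
      simp only [ofOnes, Fin.val_mk, Finset.mem_singleton, Finset.mem_insert, ne_eq, decide_eq_decide, true_iff, iff_true, false_iff, iff_false, true_or, or_true, false_or, or_false]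
      omega
    have hq' : m.val = 3 + 2 * l' ∨ m'.val = 3 + 2 * l' := by
      refine diff_val hD (by omega) ?_
      simp only [ofOnes, Fin.val_mk, Finset.mem_singleton, Finset.mem_insert, ne_eq, decide_eq_decide, true_iff, iff_true, false_iff, iff_false, true_or, or_true, false_or, or_false]
      omega
    omega

/-- Master pairwise lemma for two distinct common neighbours in `I0 ∪ J2 ∪ J3`. -/
lemma masterPair {d : ℕ} (hd : 15 ≤ d) {T : ℕ} {S : ℕ → Cube (d - 9)}
    (hS : IsSnake (d - 9) 3 T S) (hcd : SnakeConds (d - 9) T S) {u u' : Cube d}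
    (hu : u ∈ I0 d T S ∨ u ∈ J2 d ∪ J3 d) (hu' : u' ∈ I0 d T S ∨ u' ∈ J2 d ∪ J3 d)
    (hne : u ≠ u') {m m' : Fin d} (hmm : m ≠ m')
    (hD : ∀ c, u c ≠ u' c ↔ (c = m ∨ c = m')) :
    ∃ a, 1 ≤ a ∧ a ≤ 3 ∧
      (((m.val = 2 * a + 1 ∧ m'.val = 2 * a + 2) ∨
        (m.val = 2 * a + 2 ∧ m'.val = 2 * a + 1)) ∨
       ((m.val = 0 ∧ m'.val = 1) ∨ (m.val = 1 ∧ m'.val = 0))) ∧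
      (3 ≤ m.val → u ∈ I0 d T S ∧ u' ∈ I0 d T S) := by
  have hD' : ∀ c, u' c ≠ u c ↔ (c = m ∨ c = m') := fun c => by
    rw [ne_comm]; exact hD c
  rcases hu with huI | huJ
  · rcases hu' with huI' | huJ'
    · obtain ⟨a, ha1, ha3, hperm⟩ := pair_I0_I0 hd hS huI huI' hne hmm hD
      exact ⟨a, ha1, ha3, Or.inl hperm, fun _ => ⟨huI, huI'⟩⟩
    · rcases huJ' with h2 | h3
      · exact absurd (pair_I0_J2 hd huI h2 hmm hD) (by simp)
      · exact absurd (pair_I0_J3 hd hS hcd huI h3 hmm hD) (by simp)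
  · rcases hu' with huI' | huJ'
    · rcases huJ with h2 | h3
      · exact absurd (pair_I0_J2 hd huI' h2 hmm hD') (by simp)
      · exact absurd (pair_I0_J3 hd hS hcd huI' h3 hmm hD') (by simp)
    · have hperm : (m.val = 0 ∧ m'.val = 1) ∨ (m.val = 1 ∧ m'.val = 0) := by
        rcases huJ with h2 | h3 <;> rcases huJ' with h2' | h3'
        · exact pair_J2_J2 hd h2 h2' hne hmm hD
        · exact absurd (pair_J2_J3 hd h2 h3' hmm hD) (by simp)
        · exact absurd (pair_J2_J3 hd h2' h3 hmm hD') (by simp)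
        · exact pair_J3_J3 hd h3 h3' hne hmm hD
      exact ⟨1, by omega, by omega, Or.inr hperm, fun h => absurd h (by omega)⟩

end AuxStmt13

/-- (Base of Claim 1.) Let `d ≥ 15` be odd, `d'' = d − 9`, and let `S`
be a `3`-snake of length `T` in `Q_{d''}` satisfying the five snake conditions. Then
`I' = I_0 ∪ J_1 ∪ J_2 ∪ J_3` is stable under 3-neighbour bootstrap percolation on `Q_d`:
no vertex outside `I'` has three or more neighbours in `I'`. -/
theorem stmt13 (d : ℕ) (hd : 15 ≤ d) (hodd : Odd d) (T : ℕ) (S : ℕ → Cube (d - 9))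
    (hsnake : IsSnake (d - 9) 3 T S) (hconds : SnakeConds (d - 9) T S) :
    ∀ v : Cube d, v ∉ I0 d T S ∪ J1 d ∪ J2 d ∪ J3 d →
      {u : Cube d | hammingDist u v = 1 ∧ u ∈ I0 d T S ∪ J1 d ∪ J2 d ∪ J3 d}.ncard < 3 := by
  intro v hv
  by_contra hcon
  push_neg at hcon
  have hfin : ({u : Cube d | hammingDist u v = 1 ∧
      u ∈ I0 d T S ∪ J1 d ∪ J2 d ∪ J3 d}).Finite := Set.toFinite _
  obtain ⟨u1, h1, u2, h2, u3, h3, h12, h13, h23⟩ :=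
    (Set.two_lt_ncard hfin).1 (by omega)
  obtain ⟨m1, hm1a, hm1b⟩ := cube_exists_flip h1.1
  obtain ⟨m2, hm2a, hm2b⟩ := cube_exists_flip h2.1
  obtain ⟨m3, hm3a, hm3b⟩ := cube_exists_flip h3.1
  have hmm12 : m1 ≠ m2 := by
    rintro rfl
    apply h12
    funext c
    by_cases hc : c = m1
    · subst hc; exact bool_ne_ne hm1a hm2a
    · rw [hm1b c hc, hm2b c hc]
  have hmm13 : m1 ≠ m3 := by
    rintro rfl
    apply h13
    funext c
    by_cases hc : c = m1
    · subst hc; exact bool_ne_ne hm1a hm3a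
    · rw [hm1b c hc, hm3b c hc]
  have hmm23 : m2 ≠ m3 := by
    rintro rfl
    apply h23
    funext c
    by_cases hc : c = m2
    · subst hc; exact bool_ne_ne hm2a hm3a
    · rw [hm2b c hc, hm3b c hc]
  have hD12 := diff_char hmm12 hm1a hm1b hm2a hm2b
  have hD13 := diff_char hmm13 hm1a hm1b hm3a hm3b
  have hD23 := diff_char hmm23 hm2a hm2b hm3a hm3b
  have hv1 : v ∉ J1 d := fun h => hv (Or.inl (Or.inl (Or.inr h)))
  have hvj : ∃ j : Fin d, j.val < 2 ∧ v j = false := by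
    by_contra hno
    push_neg at hno
    exact hv1 (fun i hi => Bool.ne_false_iff.mp (hno i hi))
  obtain ⟨j, hj2, hjf⟩ := hvj
  have flipJ1 : ∀ (u : Cube d) (m : Fin d), u ∈ J1 d → u m ≠ v m →
      (∀ c, c ≠ m → u c = v c) → m = j := by
    intro u m hu hm hmo
    by_contra hne
    have hj := hmo j (fun h => hne h.symm)
    rw [hu j hj2, hjf] at hj
    exact Bool.noConfusion hj
  have split : ∀ u : Cube d, u ∈ I0 d T S ∪ J1 d ∪ J2 d ∪ J3 d →
      u ∈ J1 d ∨ (u ∈ I0 d T S ∨ u ∈ J2 d ∪ J3 d) := by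
    intro u hu
    rcases hu with ((h | h) | h) | h
    exacts [Or.inr (Or.inl h), Or.inl h, Or.inr (Or.inr (Or.inl h)),
      Or.inr (Or.inr (Or.inr h))]
  -- helper finishing the case of exactly one J1-neighbour
  have oneJ1 : ∀ (ua ub uc : Cube d) (ma mb mc : Fin d), ua ∈ J1 d →
      (ub ∈ I0 d T S ∨ ub ∈ J2 d ∪ J3 d) → (uc ∈ I0 d T S ∨ uc ∈ J2 d ∪ J3 d) →
      ub ≠ uc → ma ≠ mb → ma ≠ mc → mb ≠ mc →
      (ua ma ≠ v ma) → (∀ c, c ≠ ma → ua c = v c) →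
      (ub mb ≠ v mb) → (∀ c, c ≠ mb → ub c = v c) →
      (∀ c, ub c ≠ uc c ↔ (c = mb ∨ c = mc)) → False := by
    intro ua ub uc ma mb mc hA hQb hQc hneq hab hac hbc hmaa hmao hmba hmbo hDbc
    have hmaj := flipJ1 ua ma hA hmaa hmao
    obtain ⟨a, ha1, ha3, harith, hmem⟩ := masterPair hd hsnake hconds hQb hQc hneq hbc hDbc
    have hma2 : ma.val < 2 := by rw [hmaj]; exact hj2
    rcases harith with hI | h01
    · have hmb3 : 3 ≤ mb.val := by omega
      obtain ⟨hubI, -⟩ := hmem hmb3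
      have key : ∀ c : Fin d, c.val < 2 → c ≠ ma → False := by
        intro c hc hcm
        have hbc' : ub c = false := I0_first hubI (by omega)
        have hvc : v c = false := by
          rw [← hmbo c (fun h => by have := congrArg Fin.val h; omega)]
          exact hbc'
        have htru : ua c = true := hA c hc
        rw [hmao c hcm, hvc] at htru
        exact Bool.noConfusion htru
      have hma01 : ma.val = 0 ∨ ma.val = 1 := by omega
      rcases hma01 with h | h
      · exact key ⟨1, by omega⟩ (by norm_num)
          (fun he => by have := congrArg Fin.val he; rw [Fin.val_mk] at this; omega)
      · exact key ⟨0, by omega⟩ (by norm_num)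
          (fun he => by have := congrArg Fin.val he; rw [Fin.val_mk] at this; omega)
    · have dab : ma.val ≠ mb.val := fun h => hab (Fin.ext h)
      have dac : ma.val ≠ mc.val := fun h => hac (Fin.ext h)
      omega
  rcases split u1 h1.2 with hA1 | hQ1 <;> rcases split u2 h2.2 with hA2 | hQ2 <;>
    rcases split u3 h3.2 with hA3 | hQ3
  · exact hmm12 ((flipJ1 u1 m1 hA1 hm1a hm1b).trans (flipJ1 u2 m2 hA2 hm2a hm2b).symm)
  · exact hmm12 ((flipJ1 u1 m1 hA1 hm1a hm1b).trans (flipJ1 u2 m2 hA2 hm2a hm2b).symm)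
  · exact hmm13 ((flipJ1 u1 m1 hA1 hm1a hm1b).trans (flipJ1 u3 m3 hA3 hm3a hm3b).symm)
  · exact oneJ1 u1 u2 u3 m1 m2 m3 hA1 hQ2 hQ3 h23 hmm12 hmm13 hmm23 hm1a hm1b hm2a hm2b hD23
  · exact hmm23 ((flipJ1 u2 m2 hA2 hm2a hm2b).trans (flipJ1 u3 m3 hA3 hm3a hm3b).symm)
  · exact oneJ1 u2 u1 u3 m2 m1 m3 hA2 hQ1 hQ3 h13 (Ne.symm hmm12) hmm23 hmm13 hm2a hm2b
      hm1a hm1b hD13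
  · exact oneJ1 u3 u1 u2 m3 m1 m2 hA3 hQ1 hQ2 h12 (Ne.symm hmm13) (Ne.symm hmm23) hmm12
      hm3a hm3b hm1a hm1b hD12
  · obtain ⟨a, ha1, ha3, hA, -⟩ := masterPair hd hsnake hconds hQ1 hQ2 h12 hmm12 hD12
    obtain ⟨b, hb1, hb3, hB, -⟩ := masterPair hd hsnake hconds hQ1 hQ3 h13 hmm13 hD13
    obtain ⟨c, hc1, hc3, hC, -⟩ := masterPair hd hsnake hconds hQ2 hQ3 h23 hmm23 hD23
    have d12 : m1.val ≠ m2.val := fun h => hmm12 (Fin.ext h)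
    have d13 : m1.val ≠ m3.val := fun h => hmm13 (Fin.ext h)
    have d23 : m2.val ≠ m3.val := fun h => hmm23 (Fin.ext h)
    omega
end

section
/- Let d ≥ 15 be odd and d' = d − 3. The pairs of distinct vertices of J_3 at Hamming distance at most 2 are exactly the pairs {u, w} where u and w have the same last d coordinates except that (u_1,u_2) = (1,0) and (w_1,w_2) = (0,1) and u, w agree in all coordinates from position 3 onwards; moreover each such pair is at Hamming distance exactly 2. In particular any two distinct vertices of J_3 agreeing in their first two coordinates are at Hamming distance at least 4. -/
lemma hd_filter {d : ℕ} (x y : Cube d) :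
    hammingDist x y = (Finset.univ.filter (fun i => x i ≠ y i)).card := rfl

lemma mem_diff_iff {d : ℕ} (s t : Finset ℕ) (i : Fin d) :
    ofOnes d s i ≠ ofOnes d t i ↔ ¬ (i.val ∈ s ↔ i.val ∈ t) := by
  simp [ofOnes, decide_eq_decide]

lemma dist_ge_four {d : ℕ} (a a' l l' : ℕ) (hd : 15 ≤ d)
    (hl : 2*l+2 ≤ d-3) (hl' : 2*l'+2 ≤ d-3) (hne : l ≠ l')
    (ha : a < 2) (ha' : a' < 2) :
    4 ≤ hammingDist (ofOnes d ({a, 3+2*l, 4+2*l} : Finset ℕ))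
      (ofOnes d {a', 3+2*l', 4+2*l'}) := by
  rw [hd_filter]
  have hA : 3+2*l < d := by omega
  have hB : 4+2*l < d := by omega
  have hA' : 3+2*l' < d := by omega
  have hB' : 4+2*l' < d := by omega
  have hsub : ({⟨3+2*l,hA⟩, ⟨4+2*l,hB⟩, ⟨3+2*l',hA'⟩, ⟨4+2*l',hB'⟩} : Finset (Fin d)) ⊆
      Finset.univ.filter
        (fun i => ofOnes d ({a,3+2*l,4+2*l}:Finset ℕ) i ≠ ofOnes d {a',3+2*l',4+2*l'} i) := by
    intro i hi
    simp only [Finset.mem_insert, Finset.mem_singleton] at hi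
    simp only [Finset.mem_filter, Finset.mem_univ, true_and, mem_diff_iff,
      Finset.mem_insert, Finset.mem_singleton]
    rcases hi with h|h|h|h
    · have hv : i.val = 3+2*l := by rw [h]
      omega
    · have hv : i.val = 4+2*l := by rw [h]
      omega
    · have hv : i.val = 3+2*l' := by rw [h]
      omega
    · have hv : i.val = 4+2*l' := by rw [h]
      omega
  have hcard : ({⟨3+2*l,hA⟩, ⟨4+2*l,hB⟩, ⟨3+2*l',hA'⟩, ⟨4+2*l',hB'⟩} : Finset (Fin d)).card = 4 := by
    rw [Finset.card_insert_of_notMem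
        (by simp only [Finset.mem_insert, Finset.mem_singleton, Fin.mk.injEq]; omega),
      Finset.card_insert_of_notMem
        (by simp only [Finset.mem_insert, Finset.mem_singleton, Fin.mk.injEq]; omega),
      Finset.card_insert_of_notMem
        (by simp only [Finset.mem_singleton, Fin.mk.injEq]; omega),
      Finset.card_singleton]
  have hle := Finset.card_le_card hsub
  omega

lemma dist_eq_two_s16 {d l : ℕ} (hd : 15 ≤ d) (hl : 2*l+2 ≤ d-3) :
    hammingDist (ofOnes d ({0, 3+2*l, 4+2*l}:Finset ℕ)) (ofOnes d {1, 3+2*l, 4+2*l}) = 2 := by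
  rw [hd_filter]
  have h0 : 0 < d := by omega
  have h1 : 1 < d := by omega
  have hset : Finset.univ.filter
      (fun i => ofOnes d ({0,3+2*l,4+2*l}:Finset ℕ) i ≠ ofOnes d {1,3+2*l,4+2*l} i)
      = {(⟨0,h0⟩ : Fin d), ⟨1,h1⟩} := by
    ext i
    simp only [Finset.mem_filter, Finset.mem_univ, true_and, mem_diff_iff,
      Finset.mem_insert, Finset.mem_singleton, Fin.ext_iff]
    omega
  rw [hset, Finset.card_insert_of_notMem (by simp [Fin.ext_iff]), Finset.card_singleton]

/-- Let `d ≥ 15` be odd. The pairs of distinct vertices of `J_3` at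
Hamming distance at most `2` are exactly the pairs `{u, w}` with `(u_1,u_2) = (1,0)`,
`(w_1,w_2) = (0,1)` agreeing in all coordinates from position 3 onwards (same `l`);
each such pair is at distance exactly `2`. In particular any two distinct vertices of
`J_3` agreeing in their first two coordinates are at Hamming distance at least `4`. -/
theorem stmt16 (d : ℕ) (hd : 15 ≤ d) (hodd : Odd d) :
    (∀ u ∈ J3 d, ∀ w ∈ J3 d, u ≠ w → hammingDist u w ≤ 2 →
      hammingDist u w = 2 ∧ ∃ l : ℕ, 2 * l + 2 ≤ d - 3 ∧
        ((u = ofOnes d {0, 3 + 2 * l, 4 + 2 * l} ∧ w = ofOnes d {1, 3 + 2 * l, 4 + 2 * l}) ∨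
         (u = ofOnes d {1, 3 + 2 * l, 4 + 2 * l} ∧ w = ofOnes d {0, 3 + 2 * l, 4 + 2 * l}))) ∧
    (∀ l : ℕ, 2 * l + 2 ≤ d - 3 →
      hammingDist (ofOnes d {0, 3 + 2 * l, 4 + 2 * l}) (ofOnes d {1, 3 + 2 * l, 4 + 2 * l})
        = 2) ∧
    (∀ u ∈ J3 d, ∀ w ∈ J3 d, u ≠ w → (∀ i : Fin d, i.val < 2 → u i = w i) →
      4 ≤ hammingDist u w) := by
  have key4 : ∀ a a' l l' : ℕ, a < 2 → a' < 2 → 2*l+2 ≤ d-3 → 2*l'+2 ≤ d-3 → l ≠ l' →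
      4 ≤ hammingDist (ofOnes d ({a, 3+2*l, 4+2*l} : Finset ℕ))
        (ofOnes d {a', 3+2*l', 4+2*l'}) := by
    intro a a' l l' ha ha' hl hl' hne
    exact dist_ge_four a a' l l' hd hl hl' hne ha ha'
  refine ⟨?_, fun l hl => dist_eq_two_s16 hd hl, ?_⟩
  · rintro u ⟨l, hl, hu⟩ w ⟨l', hl', hw⟩ hne hle
    rcases eq_or_ne l l' with rfl | hll
    · rcases hu with rfl|rfl <;> rcases hw with rfl|rfl
      · exact absurd rfl hne
      · exact ⟨dist_eq_two_s16 hd hl, l, hl, Or.inl ⟨rfl, rfl⟩⟩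
      · exact ⟨by rw [hammingDist_comm]; exact dist_eq_two_s16 hd hl, l, hl, Or.inr ⟨rfl, rfl⟩⟩
      · exact absurd rfl hne
    · exfalso
      rcases hu with rfl|rfl <;> rcases hw with rfl|rfl
      · have := key4 0 0 l l' (by omega) (by omega) hl hl' hll; omega
      · have := key4 0 1 l l' (by omega) (by omega) hl hl' hll; omega
      · have := key4 1 0 l l' (by omega) (by omega) hl hl' hll; omega
      · have := key4 1 1 l l' (by omega) (by omega) hl hl' hll; omega
  · rintro u ⟨l, hl, hu⟩ w ⟨l', hl', hw⟩ hne hagree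
    rcases hu with rfl|rfl <;> rcases hw with rfl|rfl
    · rcases eq_or_ne l l' with rfl | hll'
      · exact absurd rfl hne
      · exact key4 0 0 l l' (by omega) (by omega) hl hl' hll'
    · exfalso
      have hi0 : (0:ℕ) < d := by omega
      have h0 := hagree ⟨0, hi0⟩ (by norm_num)
      have e1 : ofOnes d ({0, 3+2*l, 4+2*l}:Finset ℕ) ⟨0, hi0⟩ = true := by
        simp [ofOnes]
      have e2 : ofOnes d ({1, 3+2*l', 4+2*l'}:Finset ℕ) ⟨0, hi0⟩ = false := by
        simp only [ofOnes, Fin.val_mk, decide_eq_false_iff_not, Finset.mem_insert,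
          Finset.mem_singleton]
        omega
      rw [e1, e2] at h0
      exact Bool.noConfusion h0
    · exfalso
      have hi0 : (0:ℕ) < d := by omega
      have h0 := hagree ⟨0, hi0⟩ (by norm_num)
      have e1 : ofOnes d ({1, 3+2*l, 4+2*l}:Finset ℕ) ⟨0, hi0⟩ = false := by
        simp only [ofOnes, Fin.val_mk, decide_eq_false_iff_not, Finset.mem_insert,
          Finset.mem_singleton]
        omega
      have e2 : ofOnes d ({0, 3+2*l', 4+2*l'}:Finset ℕ) ⟨0, hi0⟩ = true := by
        simp [ofOnes]
      rw [e1, e2] at h0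
      exact Bool.noConfusion h0
    · rcases eq_or_ne l l' with rfl | hll'
      · exact absurd rfl hne
      · exact key4 1 1 l l' (by omega) (by omega) hl hl' hll'
end
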